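/- arXiv:1809.00229 — 3 statements merged into one kernel-verified Lean document; each statement's English description precedes it below -/
import Mathlib

section
/- Let q₀ ∈ L²(0,π), α ∈ ℝ, k ≥ 1, and suppose μ ∈ ℝ is the k-th eigenvalue of L[q₀] (i.e., L[q₀] admits an eigenfunction with eigenvalue μ, boundary parameter α, and exactly k−1 zeros in (0,π)). Then for every λ ≥ μ, the nonlinear problem (NP_{+1}) (with potential q₀, spectral parameter λ and boundary parameter α) has no nonzero solution having at most k−1 zeros in the open interval (0,π). -/
open MeasureTheory Set Real

noncomputable section

/-- Lebesgue measure restricted to the open interval (0, π). -/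
def μI : Measure ℝ := volume.restrict (Set.Ioo 0 Real.pi)

/-- `q` belongs to `L²(0,π)`. -/
def MemL2 (q : ℝ → ℝ) : Prop := MemLp q 2 μI

/-- The `L²(0,π)` norm. -/
def l2norm (q : ℝ → ℝ) : ℝ := (eLpNorm q 2 μI).toReal

/-- `u` is `C¹` on `[0,π]` with derivative `u'`, and `u'` is absolutely continuous
with a.e. (integrable) derivative `u''`, expressed via the fundamental theorem of
calculus: `u' x = u' 0 + ∫_0^x u''`. -/
def IsC2AC (u u' u'' : ℝ → ℝ) : Prop :=
  (∀ x ∈ Set.Icc (0:ℝ) Real.pi, HasDerivWithinAt u (u' x) (Set.Icc 0 Real.pi) x) ∧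
  ContinuousOn u' (Set.Icc 0 Real.pi) ∧
  IntervalIntegrable u'' MeasureTheory.volume 0 Real.pi ∧
  (∀ x ∈ Set.Icc (0:ℝ) Real.pi, u' x = u' 0 + ∫ t in (0:ℝ)..x, u'' t)

/-- Separated boundary conditions with boundary parameter `α`. -/
def BC (α : ℝ) (u u' : ℝ → ℝ) : Prop :=
  u 0 * Real.cos α + u' 0 * Real.sin α = 0 ∧
  u Real.pi * Real.cos α + u' Real.pi * Real.sin α = 0

/-- `u` is not identically zero on `[0,π]`. -/
def Nonzero (u : ℝ → ℝ) : Prop := ∃ x ∈ Set.Icc (0:ℝ) Real.pi, u x ≠ 0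

/-- The set of zeros of `u` in the open interval `(0,π)`. -/
def ZeroSet (u : ℝ → ℝ) : Set ℝ := {x ∈ Set.Ioo (0:ℝ) Real.pi | u x = 0}

/-- `u` (with derivative `u'` and a.e. second derivative `u''`) is an eigenfunction of
the Sturm–Liouville operator `L[q]u = -u'' + q u` with eigenvalue `lam` and boundary
parameter `α`. -/
def IsEigenfun (q : ℝ → ℝ) (α lam : ℝ) (u u' u'' : ℝ → ℝ) : Prop :=
  IsC2AC u u' u'' ∧ MemLp u'' 2 μI ∧
  (∀ᵐ x ∂μI, -u'' x + q x * u x = lam * u x) ∧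
  Nonzero u ∧ BC α u u'

/-- `lam` is the `k`-th eigenvalue of `L[q]` (boundary parameter `α`): there is an
eigenfunction with eigenvalue `lam` having exactly `k-1` zeros in `(0,π)`. -/
def HasEigenK (q : ℝ → ℝ) (α lam : ℝ) (k : ℕ) : Prop :=
  ∃ u u' u'', IsEigenfun q α lam u u' u'' ∧
    (ZeroSet u).Finite ∧ (ZeroSet u).ncard = k - 1

/-- The admissible set `A_k(lam)` of potentials `q ∈ L²(0,π)` for which `lam` is the
`k`-th eigenvalue of `L[q]`. -/
def Adm (α lam : ℝ) (k : ℕ) : Set (ℝ → ℝ) := {q | MemL2 q ∧ HasEigenK q α lam k}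

/-- `u` is a solution of the nonlinear problem `(NP_δ)`:
`-u'' + q₀ u = lam u + δ u³` a.e. in `(0,π)` with separated boundary conditions. -/
def IsNPSol (q₀ : ℝ → ℝ) (α lam δ : ℝ) (u u' u'' : ℝ → ℝ) : Prop :=
  IsC2AC u u' u'' ∧
  (∀ᵐ x ∂μI, -u'' x + q₀ x * u x = lam * u x + δ * (u x) ^ 3) ∧
  BC α u u'

/-! ### Auxiliary lemmas -/

lemma my_swap (φ ψ : ℝ → ℝ) (a b : ℝ)
    (hφ : IntegrableOn φ (Ioc a b) volume) (hψ : IntegrableOn ψ (Ioc a b) volume) :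
    ∫ t in Ioc a b, φ t * ∫ s in Ioc t b, ψ s
      = ∫ s in Ioc a b, (∫ t in Ioc a s, φ t) * ψ s := by
  set μ : Measure ℝ := volume.restrict (Ioc a b) with hμ
  have hS : MeasurableSet {p : ℝ × ℝ | p.1 < p.2} :=
    measurableSet_lt measurable_fst measurable_snd
  have hint : Integrable (fun p : ℝ × ℝ =>
      ({p : ℝ × ℝ | p.1 < p.2}).indicator (fun p => φ p.1 * ψ p.2) p) (μ.prod μ) :=
    (Integrable.mul_prod hφ hψ).indicator hS
  have swap := integral_integral_swap (f := fun t s =>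
      ({p : ℝ × ℝ | p.1 < p.2}).indicator (fun p => φ p.1 * ψ p.2) (t, s))
      (μ := μ) (ν := μ) hint
  have hL : (∫ t, (∫ s, ({p : ℝ × ℝ | p.1 < p.2}).indicator
      (fun p => φ p.1 * ψ p.2) (t, s) ∂μ) ∂μ)
      = ∫ t in Ioc a b, φ t * ∫ s in Ioc t b, ψ s := by
    rw [hμ]
    apply setIntegral_congr_fun measurableSet_Ioc
    intro t ht
    have h1 : (fun s => ({p : ℝ × ℝ | p.1 < p.2}).indicator (fun p => φ p.1 * ψ p.2) (t, s))
        = (Ioi t).indicator (fun s => φ t * ψ s) := by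
      funext s
      by_cases h : t < s
      · simp [Set.indicator_of_mem, h, Set.mem_Ioi, Set.mem_setOf_eq]
      · simp [Set.indicator_of_notMem, h, Set.mem_Ioi, Set.mem_setOf_eq]
    dsimp only
    rw [h1, integral_indicator measurableSet_Ioi,
      Measure.restrict_restrict measurableSet_Ioi]
    have : Ioi t ∩ Ioc a b = Ioc t b := by
      ext s; constructor
      · rintro ⟨h1, h2, h3⟩; exact ⟨h1, h3⟩
      · rintro ⟨h1, h2⟩; exact ⟨h1, lt_trans ht.1 h1, h2⟩
    rw [this, integral_const_mul]
  have hR : (∫ s, (∫ t, ({p : ℝ × ℝ | p.1 < p.2}).indicator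
      (fun p => φ p.1 * ψ p.2) (t, s) ∂μ) ∂μ)
      = ∫ s in Ioc a b, (∫ t in Ioc a s, φ t) * ψ s := by
    rw [hμ]
    apply setIntegral_congr_fun measurableSet_Ioc
    intro s hs
    have h1 : (fun t => ({p : ℝ × ℝ | p.1 < p.2}).indicator (fun p => φ p.1 * ψ p.2) (t, s))
        = (Iio s).indicator (fun t => φ t * ψ s) := by
      funext t
      by_cases h : t < s
      · simp [Set.indicator_of_mem, h, Set.mem_Iio, Set.mem_setOf_eq]
      · simp [Set.indicator_of_notMem, h, Set.mem_Iio, Set.mem_setOf_eq]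
    dsimp only
    rw [h1, integral_indicator measurableSet_Iio,
      Measure.restrict_restrict measurableSet_Iio]
    have : Iio s ∩ Ioc a b = Ioo a s := by
      ext t; constructor
      · rintro ⟨h1, h2, h3⟩; exact ⟨h2, h1⟩
      · rintro ⟨h1, h2⟩; exact ⟨h2, h1, le_trans (le_of_lt h2) hs.2⟩
    rw [this, integral_mul_const, ← integral_Ioc_eq_integral_Ioo]
  rw [← hL, ← hR, swap]

lemma my_parts (f g φ ψ : ℝ → ℝ) (a b : ℝ) (hab : a ≤ b)
    (hφ : IntervalIntegrable φ volume a b) (hψ : IntervalIntegrable ψ volume a b)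
    (hfc : ContinuousOn f (Icc a b)) (hgc : ContinuousOn g (Icc a b))
    (hf : ∀ x ∈ Icc a b, f x = f a + ∫ t in Ioc a x, φ t)
    (hg : ∀ x ∈ Icc a b, g x = g a + ∫ t in Ioc a x, ψ t) :
    ∫ x in Ioc a b, (φ x * g x + f x * ψ x) = f b * g b - f a * g a := by
  have huIcc : uIcc a b = Icc a b := uIcc_of_le hab
  have hfc' : ContinuousOn f (uIcc a b) := huIcc ▸ hfc
  have hgc' : ContinuousOn g (uIcc a b) := huIcc ▸ hgc
  have hIφg : IntegrableOn (fun x => φ x * g x) (Ioc a b) volume :=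
    (hφ.mul_continuousOn hgc').1
  have hIfψ : IntegrableOn (fun x => f x * ψ x) (Ioc a b) volume :=
    (hψ.continuousOn_mul hfc').1
  have hfb : f b = f a + ∫ t in Ioc a b, φ t := hf b ⟨hab, le_rfl⟩
  have hgb : g b = g a + ∫ t in Ioc a b, ψ t := hg b ⟨hab, le_rfl⟩
  have hsplit : ∀ t ∈ Ioc a b, (∫ s in Ioc t b, ψ s) = g b - g t := by
    intro t ht
    have h1 : IntervalIntegrable ψ volume a t :=
      hψ.mono_set (by rw [uIcc_of_le ht.1.le, huIcc]; exact Icc_subset_Icc le_rfl ht.2)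
    have h2 : IntervalIntegrable ψ volume t b :=
      hψ.mono_set (by rw [uIcc_of_le ht.2, huIcc]; exact Icc_subset_Icc ht.1.le le_rfl)
    have hadd := intervalIntegral.integral_add_adjacent_intervals h1 h2
    rw [intervalIntegral.integral_of_le ht.1.le, intervalIntegral.integral_of_le ht.2,
      intervalIntegral.integral_of_le hab] at hadd
    have hgt := hg t ⟨ht.1.le, ht.2⟩
    linarith
  have int1 : IntegrableOn (fun x => f a * ψ x) (Ioc a b) volume := hψ.1.const_mul _
  have base : IntegrableOn (fun x => (f x - f a) * ψ x) (Ioc a b) volume :=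
    (hψ.continuousOn_mul (hfc'.sub continuousOn_const)).1
  have int2 : IntegrableOn (fun x => (∫ t in Ioc a x, φ t) * ψ x) (Ioc a b) volume := by
    refine base.congr_fun (fun x hx => ?_) measurableSet_Ioc
    dsimp only; rw [hf x ⟨hx.1.le, hx.2⟩]; ring
  have hI2 : ∫ x in Ioc a b, f x * ψ x
      = f a * (g b - g a) + ∫ t in Ioc a b, φ t * (g b - g t) := by
    have e1 : ∫ x in Ioc a b, f x * ψ x
        = ∫ x in Ioc a b, (f a * ψ x + (∫ t in Ioc a x, φ t) * ψ x) := by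
      refine setIntegral_congr_fun measurableSet_Ioc (fun x hx => ?_)
      rw [hf x ⟨hx.1.le, hx.2⟩]; ring
    have e2 : ∫ x in Ioc a b, (∫ t in Ioc a x, φ t) * ψ x
        = ∫ t in Ioc a b, φ t * (g b - g t) := by
      rw [← my_swap φ ψ a b hφ.1 hψ.1]
      refine setIntegral_congr_fun measurableSet_Ioc (fun t ht => ?_)
      rw [hsplit t ht]
    rw [e1, integral_add int1 int2, e2, MeasureTheory.integral_const_mul]
    have : (∫ x in Ioc a b, ψ x) = g b - g a := by linarith
    rw [this]
  have intc : IntegrableOn (fun t => φ t * g b) (Ioc a b) volume := hφ.1.mul_const _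
  have hI1 : ∫ t in Ioc a b, φ t * (g b - g t)
      = g b * (f b - f a) - ∫ x in Ioc a b, φ x * g x := by
    have e1 : ∫ t in Ioc a b, φ t * (g b - g t)
        = ∫ t in Ioc a b, (φ t * g b - φ t * g t) := by
      refine setIntegral_congr_fun measurableSet_Ioc (fun t ht => ?_); ring
    rw [e1, integral_sub intc hIφg, integral_mul_const]
    have : (∫ x in Ioc a b, φ x) = f b - f a := by linarith
    rw [this]; ring
  rw [integral_add hIφg hIfψ, hI2, hI1]
  ring

lemma IsC2AC.contOn {u u' u'' : ℝ → ℝ} (h : IsC2AC u u' u'') :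
    ContinuousOn u (Set.Icc 0 Real.pi) :=
  fun x hx => (h.1 x hx).continuousWithinAt

lemma rep_self {u u' u'' : ℝ → ℝ} (h : IsC2AC u u' u'') {a x : ℝ}
    (ha : a ∈ Icc 0 Real.pi) (hx : x ∈ Icc 0 Real.pi) (hax : a ≤ x) :
    u x = u a + ∫ t in Ioc a x, u' t := by
  have hsub : Icc a x ⊆ Icc 0 Real.pi := Icc_subset_Icc ha.1 hx.2
  have hint : IntervalIntegrable u' volume a x :=
    (h.2.1.mono hsub).intervalIntegrable_of_Icc hax
  have hcont : ContinuousOn u (Icc a x) := h.contOn.mono hsub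
  have hder : ∀ t ∈ Ioo a x, HasDerivWithinAt u (u' t) (Ioi t) t := by
    intro t ht
    have htI : t ∈ Ioo 0 Real.pi := ⟨lt_of_le_of_lt ha.1 ht.1, lt_of_lt_of_le ht.2 hx.2⟩
    exact ((h.1 t (Ioo_subset_Icc_self htI)).hasDerivAt
      (Icc_mem_nhds htI.1 htI.2)).hasDerivWithinAt
  have hftc := intervalIntegral.integral_eq_sub_of_hasDeriv_right_of_le hax hcont hder hint
  rw [intervalIntegral.integral_of_le hax] at hftc
  linarith

lemma rep_deriv {u u' u'' : ℝ → ℝ} (h : IsC2AC u u' u'') {a x : ℝ}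
    (ha : a ∈ Icc 0 Real.pi) (hx : x ∈ Icc 0 Real.pi) (hax : a ≤ x) :
    u' x = u' a + ∫ t in Ioc a x, u'' t := by
  have hπ : (0:ℝ) ≤ Real.pi := Real.pi_pos.le
  have h1 : IntervalIntegrable u'' volume 0 a :=
    h.2.2.1.mono_set (by rw [uIcc_of_le ha.1, uIcc_of_le hπ]; exact Icc_subset_Icc le_rfl ha.2)
  have h2 : IntervalIntegrable u'' volume a x :=
    h.2.2.1.mono_set (by rw [uIcc_of_le hax, uIcc_of_le hπ]; exact Icc_subset_Icc ha.1 hx.2)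
  have hadd := intervalIntegral.integral_add_adjacent_intervals h1 h2
  have e1 := h.2.2.2 x hx
  have e2 := h.2.2.2 a ha
  rw [intervalIntegral.integral_of_le hax] at hadd
  rw [e1, e2, ← hadd]
  ring

lemma wronskianFTC {u u' u'' v v' v'' : ℝ → ℝ}
    (hu : IsC2AC u u' u'') (hv : IsC2AC v v' v'') {a b : ℝ}
    (ha : a ∈ Icc 0 Real.pi) (hb : b ∈ Icc 0 Real.pi) (hab : a ≤ b) :
    ∫ x in Ioc a b, (u x * v'' x - u'' x * v x)
      = (u b * v' b - u' b * v b) - (u a * v' a - u' a * v a) := by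
  have hπ : (0:ℝ) ≤ Real.pi := Real.pi_pos.le
  have hsub : Icc a b ⊆ Icc 0 Real.pi := Icc_subset_Icc ha.1 hb.2
  have hcu : ContinuousOn u (Icc a b) := hu.contOn.mono hsub
  have hcv : ContinuousOn v (Icc a b) := hv.contOn.mono hsub
  have hcu' : ContinuousOn u' (Icc a b) := hu.2.1.mono hsub
  have hcv' : ContinuousOn v' (Icc a b) := hv.2.1.mono hsub
  have intu' : IntervalIntegrable u' volume a b := hcu'.intervalIntegrable_of_Icc hab
  have intv' : IntervalIntegrable v' volume a b := hcv'.intervalIntegrable_of_Icc hab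
  have intu'' : IntervalIntegrable u'' volume a b :=
    hu.2.2.1.mono_set (by rw [uIcc_of_le hab, uIcc_of_le hπ]; exact hsub)
  have intv'' : IntervalIntegrable v'' volume a b :=
    hv.2.2.1.mono_set (by rw [uIcc_of_le hab, uIcc_of_le hπ]; exact hsub)
  have repu : ∀ x ∈ Icc a b, u x = u a + ∫ t in Ioc a x, u' t :=
    fun x hx => rep_self hu ha (hsub hx) hx.1
  have repv : ∀ x ∈ Icc a b, v x = v a + ∫ t in Ioc a x, v' t :=
    fun x hx => rep_self hv ha (hsub hx) hx.1
  have repu' : ∀ x ∈ Icc a b, u' x = u' a + ∫ t in Ioc a x, u'' t :=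
    fun x hx => rep_deriv hu ha (hsub hx) hx.1
  have repv' : ∀ x ∈ Icc a b, v' x = v' a + ∫ t in Ioc a x, v'' t :=
    fun x hx => rep_deriv hv ha (hsub hx) hx.1
  have A := my_parts u v' u' v'' a b hab intu' intv'' hcu hcv' repu repv'
  have B := my_parts u' v u'' v' a b hab intu'' intv' hcu' hcv repu' repv
  have huIcc : uIcc a b = Icc a b := uIcc_of_le hab
  have intA : IntegrableOn (fun x => u' x * v' x + u x * v'' x) (Ioc a b) volume :=
    ((intu'.mul_continuousOn (huIcc ▸ hcv')).add (intv''.continuousOn_mul (huIcc ▸ hcu))).1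
  have intB : IntegrableOn (fun x => u'' x * v x + u' x * v' x) (Ioc a b) volume :=
    ((intu''.mul_continuousOn (huIcc ▸ hcv)).add (intv'.continuousOn_mul (huIcc ▸ hcu'))).1
  have e : ∫ x in Ioc a b, (u x * v'' x - u'' x * v x)
      = ∫ x in Ioc a b, ((u' x * v' x + u x * v'' x) - (u'' x * v x + u' x * v' x)) := by
    refine setIntegral_congr_fun measurableSet_Ioc (fun x hx => ?_); ring
  rw [e, integral_sub intA intB, A, B]
  ring
lemma nonneg_closure {f : ℝ → ℝ} {a b : ℝ} (hab : a < b) (hc : ContinuousOn f (Icc a b))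
    (hp : ∀ x ∈ Ioo a b, 0 ≤ f x) : ∀ x ∈ Icc a b, 0 ≤ f x := by
  intro x hx
  have hcl : x ∈ closure (Ioo a b) := by rw [closure_Ioo hab.ne]; exact hx
  have hne : (nhdsWithin x (Ioo a b)).NeBot := mem_closure_iff_nhdsWithin_neBot.mp hcl
  have ht : Filter.Tendsto f (nhdsWithin x (Ioo a b)) (nhds (f x)) :=
    (hc x hx).mono Ioo_subset_Icc_self
  exact ge_of_tendsto ht (Filter.eventually_of_mem self_mem_nhdsWithin hp)

lemma deriv_sign_left {f : ℝ → ℝ} {d a b : ℝ} (hab : a < b)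
    (hd : HasDerivWithinAt f d (Icc a b) a) (hfa : f a = 0)
    (hp : ∀ x ∈ Ioo a b, 0 ≤ f x) : 0 ≤ d := by
  have ht := hasDerivWithinAt_iff_tendsto_slope.mp hd
  have hmono : nhdsWithin a (Ioo a b) ≤ nhdsWithin a (Icc a b \ {a}) :=
    nhdsWithin_mono _ (fun x hx => ⟨Ioo_subset_Icc_self hx, hx.1.ne'⟩)
  have hne : (nhdsWithin a (Ioo a b)).NeBot := by
    apply mem_closure_iff_nhdsWithin_neBot.mp
    rw [closure_Ioo hab.ne]; exact ⟨le_rfl, hab.le⟩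
  refine ge_of_tendsto (ht.mono_left hmono)
    (Filter.eventually_of_mem self_mem_nhdsWithin (fun x hx => ?_))
  have : slope f a x = f x / (x - a) := by rw [slope_def_field, hfa]; ring
  rw [this]
  exact div_nonneg (hp x hx) (by linarith [hx.1])

lemma deriv_sign_right {f : ℝ → ℝ} {d a b : ℝ} (hab : a < b)
    (hd : HasDerivWithinAt f d (Icc a b) b) (hfb : f b = 0)
    (hp : ∀ x ∈ Ioo a b, 0 ≤ f x) : d ≤ 0 := by
  have ht := hasDerivWithinAt_iff_tendsto_slope.mp hd
  have hmono : nhdsWithin b (Ioo a b) ≤ nhdsWithin b (Icc a b \ {b}) :=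
    nhdsWithin_mono _ (fun x hx => ⟨Ioo_subset_Icc_self hx, hx.2.ne⟩)
  have hne : (nhdsWithin b (Ioo a b)).NeBot := by
    apply mem_closure_iff_nhdsWithin_neBot.mp
    rw [closure_Ioo hab.ne]; exact ⟨hab.le, le_rfl⟩
  refine le_of_tendsto (ht.mono_left hmono)
    (Filter.eventually_of_mem self_mem_nhdsWithin (fun x hx => ?_))
  have : slope f b x = f x / (x - b) := by rw [slope_def_field, hfb]; ring
  rw [this]
  exact div_nonpos_of_nonneg_of_nonpos (hp x hx) (by linarith [hx.2])

lemma sign_const {f : ℝ → ℝ} {a b : ℝ} (hc : ContinuousOn f (Icc a b))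
    (hne : ∀ x ∈ Ioo a b, f x ≠ 0) :
    (∀ x ∈ Ioo a b, 0 < f x) ∨ (∀ x ∈ Ioo a b, f x < 0) := by
  by_contra h
  push_neg at h
  obtain ⟨⟨x, hx, hfx⟩, ⟨y, hy, hfy⟩⟩ := h
  have hfx' : f x < 0 := lt_of_le_of_ne hfx (hne x hx)
  have hfy' : 0 < f y := lt_of_le_of_ne hfy (Ne.symm (hne y hy))
  rcases le_total x y with hxy | hyx
  · have hss : Icc x y ⊆ Ioo a b := fun z hz => ⟨lt_of_lt_of_le hx.1 hz.1, lt_of_le_of_lt hz.2 hy.2⟩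
    obtain ⟨z, hz, hz0⟩ := intermediate_value_Icc hxy
      (hc.mono (hss.trans Ioo_subset_Icc_self)) (show (0:ℝ) ∈ Icc (f x) (f y) from ⟨hfx, hfy⟩)
    exact hne z (hss hz) hz0
  · have hss : Icc y x ⊆ Ioo a b := fun z hz => ⟨lt_of_lt_of_le hy.1 hz.1, lt_of_le_of_lt hz.2 hx.2⟩
    obtain ⟨z, hz, hz0⟩ := intermediate_value_Icc' hyx
      (hc.mono (hss.trans Ioo_subset_Icc_self)) (show (0:ℝ) ∈ Icc (f x) (f y) from ⟨hfx, hfy⟩)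
    exact hne z (hss hz) hz0

lemma wzero {c s x y z w : ℝ} (h1 : x * c + y * s = 0) (h2 : z * c + w * s = 0)
    (hcs : s ^ 2 + c ^ 2 = 1) : x * w - y * z = 0 := by
  have hc : (x * w - y * z) * c = 0 := by linear_combination w * h1 - y * h2
  have hs : (x * w - y * z) * s = 0 := by linear_combination x * h2 - z * h1
  calc x * w - y * z = (x * w - y * z) * (s ^ 2 + c ^ 2) := by rw [hcs, mul_one]
    _ = ((x * w - y * z) * s) * s + ((x * w - y * z) * c) * c := by ring
    _ = 0 := by rw [hs, hc]; ring
lemma key_comparison (q₀ : ℝ → ℝ) (lam mu : ℝ) (hlm : mu ≤ lam)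
    (u u' u'' v v' v'' : ℝ → ℝ)
    (hu : IsC2AC u u' u'') (hv : IsC2AC v v' v'')
    (hue : ∀ᵐ x ∂μI, -u'' x + q₀ x * u x = lam * u x + 1 * u x ^ 3)
    (hve : ∀ᵐ x ∂μI, -v'' x + q₀ x * v x = mu * v x)
    {a b : ℝ} (ha : a ∈ Icc 0 Real.pi) (hb : b ∈ Icc 0 Real.pi) (hab : a < b)
    (σ τ : ℝ)
    (hup : ∀ x ∈ Ioo a b, 0 < σ * u x) (hvp : ∀ x ∈ Ioo a b, 0 < τ * v x)
    (hWa : 0 ≤ σ * τ * (u a * v' a - u' a * v a))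
    (hWb : σ * τ * (u b * v' b - u' b * v b) ≤ 0) : False := by
  have hsub : Icc a b ⊆ Icc 0 Real.pi := Icc_subset_Icc ha.1 hb.2
  have hcu : ContinuousOn u (Icc a b) := hu.contOn.mono hsub
  have hcv : ContinuousOn v (Icc a b) := hv.contOn.mono hsub
  have hcσu : ContinuousOn (fun x => σ * u x) (Icc a b) := continuousOn_const.mul hcu
  have hcτv : ContinuousOn (fun x => τ * v x) (Icc a b) := continuousOn_const.mul hcv
  have hunn : ∀ x ∈ Icc a b, 0 ≤ σ * u x :=
    nonneg_closure hab hcσu (fun x hx => (hup x hx).le)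
  have hvnn : ∀ x ∈ Icc a b, 0 ≤ τ * v x :=
    nonneg_closure hab hcτv (fun x hx => (hvp x hx).le)
  -- the a.e. identity
  set g : ℝ → ℝ := fun x => (lam - mu + u x ^ 2) * ((σ * u x) * (τ * v x)) with hg
  set h : ℝ → ℝ := fun x => u x ^ 2 * ((σ * u x) * (τ * v x)) with hh
  have hu' : ∀ᵐ x ∂(volume : Measure ℝ), x ∈ Ioo 0 Real.pi →
      (-u'' x + q₀ x * u x = lam * u x + 1 * u x ^ 3) :=
    (ae_restrict_iff' measurableSet_Ioo).mp hue
  have hv' : ∀ᵐ x ∂(volume : Measure ℝ), x ∈ Ioo 0 Real.pi →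
      (-v'' x + q₀ x * v x = mu * v x) :=
    (ae_restrict_iff' measurableSet_Ioo).mp hve
  have hπae : ∀ᵐ x : ℝ ∂volume, x ≠ Real.pi := by
    rw [ae_iff]
    have : {x : ℝ | ¬ x ≠ Real.pi} = {Real.pi} := by ext; simp
    rw [this]; exact measure_singleton _
  have h3 : ∀ᵐ x ∂(volume : Measure ℝ), x ∈ Set.uIoc a b →
      σ * τ * (u x * v'' x - u'' x * v x) = g x := by
    filter_upwards [hu', hv', hπae] with x h1 h2 hxπ hxmem
    rw [uIoc_of_le hab.le] at hxmem
    have hx0π : x ∈ Ioo 0 Real.pi :=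
      ⟨lt_of_le_of_lt ha.1 hxmem.1, lt_of_le_of_ne (le_trans hxmem.2 hb.2) hxπ⟩
    have e1 := h1 hx0π
    have e2 := h2 hx0π
    simp only [hg]
    linear_combination (σ * τ * v x) * e1 - (σ * τ * u x) * e2
  have hWftc := wronskianFTC hu hv ha hb hab.le
  have hIeq : ∫ x in a..b, σ * τ * (u x * v'' x - u'' x * v x)
      = σ * τ * ((u b * v' b - u' b * v b) - (u a * v' a - u' a * v a)) := by
    rw [intervalIntegral.integral_of_le hab.le, MeasureTheory.integral_const_mul, hWftc]
  have hgeq : ∫ x in a..b, σ * τ * (u x * v'' x - u'' x * v x) = ∫ x in a..b, g x :=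
    intervalIntegral.integral_congr_ae h3
  -- positivity of ∫ h and ∫ g ≥ ∫ h
  have hch : ContinuousOn h (Icc a b) := by
    apply ContinuousOn.mul
    · exact (hcu.pow 2)
    · exact hcσu.mul hcτv
  have hcg : ContinuousOn g (Icc a b) := by
    apply ContinuousOn.mul
    · exact continuousOn_const.add (hcu.pow 2)
    · exact hcσu.mul hcτv
  have hinth : IntervalIntegrable h volume a b := hch.intervalIntegrable_of_Icc hab.le
  have hintg : IntervalIntegrable g volume a b := hcg.intervalIntegrable_of_Icc hab.le
  have hpos : 0 < ∫ x in a..b, h x := by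
    apply intervalIntegral.intervalIntegral_pos_of_pos_on hinth _ hab
    intro x hx
    have h1 := hup x hx
    have h2 := hvp x hx
    have hune : u x ≠ 0 := fun h0 => by simp [h0] at h1
    have h3 : 0 < u x ^ 2 := lt_of_le_of_ne (sq_nonneg _) (Ne.symm (pow_ne_zero 2 hune))
    simp only [hh]
    exact mul_pos h3 (mul_pos h1 h2)
  have hmono : ∫ x in a..b, h x ≤ ∫ x in a..b, g x := by
    apply intervalIntegral.integral_mono_on hab.le hinth hintg
    intro x hx
    have h1 := hunn x hx
    have h2 := hvnn x hx
    have h4 : 0 ≤ lam - mu := by linarith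
    simp only [hh, hg]
    nlinarith [sq_nonneg (u x), mul_nonneg h1 h2]
  have hfin : σ * τ * ((u b * v' b - u' b * v b) - (u a * v' a - u' a * v a)) ≤ 0 := by
    have : σ * τ * ((u b * v' b - u' b * v b) - (u a * v' a - u' a * v a))
        = σ * τ * (u b * v' b - u' b * v b) - σ * τ * (u a * v' a - u' a * v a) := by ring
    rw [this]; linarith
  linarith [hgeq ▸ hIeq ▸ hfin]
/-- If μ is the k-th eigenvalue of L[q₀], then for every lam ≥ μ the problem (NP_{+1})
has no nonzero solution with at most k-1 zeros in (0,π). -/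
theorem stmt3 (q₀ : ℝ → ℝ) (hq₀ : MemL2 q₀) (α : ℝ) (k : ℕ) (hk : 1 ≤ k)
    (μ : ℝ) (hμ : HasEigenK q₀ α μ k) :
    ∀ lam : ℝ, μ ≤ lam →
      ¬ ∃ u u' u'', IsNPSol q₀ α lam 1 u u' u'' ∧ Nonzero u ∧
        (ZeroSet u).Finite ∧ (ZeroSet u).ncard ≤ k - 1 := by
  intro lam hlam
  rintro ⟨u, u', u'', ⟨huC, hue, hubc⟩, hunz, hufin, hucard⟩
  obtain ⟨v, v', v'', ⟨hvC, hvL2, hve, hvnz, hvbc⟩, hvfin, hvcard⟩ := hμ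
  have hπpos := Real.pi_pos
  set S : Set ℝ := insert 0 (insert Real.pi (ZeroSet v)) with hSdef
  have hSfin : S.Finite := (hvfin.insert _).insert _
  have hπS : Real.pi ∈ S := by simp [hSdef]
  have hSsub : S ⊆ Icc 0 Real.pi := by
    rintro x (rfl | rfl | hx)
    · exact ⟨le_rfl, hπpos.le⟩
    · exact ⟨hπpos.le, le_rfl⟩
    · exact ⟨hx.1.1.le, hx.1.2.le⟩
  have claim : ∀ a, a ∈ S → a ≠ Real.pi →
      ∃ z, z ∈ ZeroSet u ∧ z ∈ Ioo a (sInf {s | s ∈ S ∧ a < s}) := by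
    intro a haS haπ
    set T : Set ℝ := {s | s ∈ S ∧ a < s} with hTdef
    have hTfin : T.Finite := hSfin.subset (fun x hx => hx.1)
    have haπ' : a < Real.pi := lt_of_le_of_ne (hSsub haS).2 haπ
    have hTne : T.Nonempty := ⟨Real.pi, hπS, haπ'⟩
    obtain ⟨b, hbdef⟩ : ∃ b : ℝ, b = sInf T := ⟨_, rfl⟩
    rw [← hbdef]
    have hbT : b ∈ T := by rw [hbdef]; exact hTne.csInf_mem hTfin
    have hbS : b ∈ S := hbT.1
    have hab : a < b := hbT.2
    have hbπ : b ≤ Real.pi := (hSsub hbS).2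
    have ha0 : 0 ≤ a := (hSsub haS).1
    have hmin : ∀ s, s ∈ S → a < s → b ≤ s := by
      intro s hs has
      rw [hbdef]
      exact csInf_le hTfin.bddBelow ⟨hs, has⟩
    have hIoosub : Ioo a b ⊆ Ioo 0 Real.pi :=
      fun x hx => ⟨lt_of_le_of_lt ha0 hx.1, lt_of_lt_of_le hx.2 hbπ⟩
    have hvne : ∀ x ∈ Ioo a b, v x ≠ 0 := by
      intro x hx hvx
      have hxS : x ∈ S := by rw [hSdef]; right; right; exact ⟨hIoosub hx, hvx⟩
      exact absurd (hmin x hxS hx.1) (not_le.mpr hx.2)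
    by_contra hno
    push_neg at hno
    have hune : ∀ x ∈ Ioo a b, u x ≠ 0 := by
      intro x hx hux
      exact (hno x ⟨hIoosub hx, hux⟩) hx
    have haI : a ∈ Icc 0 Real.pi := hSsub haS
    have hbI : b ∈ Icc 0 Real.pi := hSsub hbS
    have hsub : Icc a b ⊆ Icc 0 Real.pi := Icc_subset_Icc ha0 hbπ
    have hcu : ContinuousOn u (Icc a b) := huC.contOn.mono hsub
    have hcv : ContinuousOn v (Icc a b) := hvC.contOn.mono hsub
    obtain ⟨σ, hup⟩ : ∃ σ : ℝ, ∀ x ∈ Ioo a b, 0 < σ * u x := by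
      rcases sign_const hcu hune with h | h
      · exact ⟨1, fun x hx => by simpa using h x hx⟩
      · refine ⟨-1, fun x hx => ?_⟩
        have := h x hx
        nlinarith
    obtain ⟨τ, hvp⟩ : ∃ τ : ℝ, ∀ x ∈ Ioo a b, 0 < τ * v x := by
      rcases sign_const hcv hvne with h | h
      · exact ⟨1, fun x hx => by simpa using h x hx⟩
      · refine ⟨-1, fun x hx => ?_⟩
        have := h x hx
        nlinarith
    have hunn : ∀ x ∈ Icc a b, 0 ≤ σ * u x :=
      nonneg_closure hab (continuousOn_const.mul hcu) (fun x hx => (hup x hx).le)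
    have hvnn : ∀ x ∈ Icc a b, 0 ≤ τ * v x :=
      nonneg_closure hab (continuousOn_const.mul hcv) (fun x hx => (hvp x hx).le)
    have haCase : a = 0 ∨ v a = 0 := by
      rcases haS with rfl | rfl | h
      · exact Or.inl rfl
      · exact absurd rfl haπ
      · exact Or.inr h.2
    have hbCase : b = Real.pi ∨ v b = 0 := by
      rcases hbS with rfl | rfl | h
      · exact absurd hab (not_lt.mpr ha0)
      · exact Or.inl rfl
      · exact Or.inr h.2
    have hWa : 0 ≤ σ * τ * (u a * v' a - u' a * v a) := by
      rcases haCase with rfl | hva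
      · have h0 : u 0 * v' 0 - u' 0 * v 0 = 0 :=
          wzero hubc.1 hvbc.1 (Real.sin_sq_add_cos_sq α)
        rw [h0, mul_zero]
      · have hda : HasDerivWithinAt (fun x => τ * v x) (τ * v' a) (Icc a b) a :=
          ((hvC.1 a haI).mono hsub).const_mul τ
        have h1 : 0 ≤ τ * v' a :=
          deriv_sign_left hab hda (by simp [hva])
            (fun x hx => hvnn x (Ioo_subset_Icc_self hx))
        have h2 : 0 ≤ σ * u a := hunn a ⟨le_rfl, hab.le⟩
        calc (0:ℝ) ≤ (σ * u a) * (τ * v' a) := mul_nonneg h2 h1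
          _ = σ * τ * (u a * v' a - u' a * v a) := by rw [hva]; ring
    have hWb : σ * τ * (u b * v' b - u' b * v b) ≤ 0 := by
      rcases hbCase with rfl | hvb
      · have h0 : u Real.pi * v' Real.pi - u' Real.pi * v Real.pi = 0 :=
          wzero hubc.2 hvbc.2 (Real.sin_sq_add_cos_sq α)
        rw [h0, mul_zero]
      · have hdb : HasDerivWithinAt (fun x => τ * v x) (τ * v' b) (Icc a b) b :=
          ((hvC.1 b hbI).mono hsub).const_mul τ
        have h1 : τ * v' b ≤ 0 :=
          deriv_sign_right hab hdb (by simp [hvb])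
            (fun x hx => hvnn x (Ioo_subset_Icc_self hx))
        have h2 : 0 ≤ σ * u b := hunn b ⟨hab.le, le_rfl⟩
        calc σ * τ * (u b * v' b - u' b * v b) = (σ * u b) * (τ * v' b) := by rw [hvb]; ring
          _ ≤ 0 := mul_nonpos_iff.mpr (Or.inl ⟨h2, h1⟩)
    exact key_comparison q₀ lam μ hlam u u' u'' v v' v'' huC hvC hue hve
      haI hbI hab σ τ hup hvp hWa hWb
  -- counting
  choose! F hF1 hF2 using claim
  set D : Set ℝ := S \ {Real.pi} with hD
  have hmem : ∀ a ∈ D, F a ∈ ZeroSet u := fun a ha => hF1 a ha.1 (by simpa using ha.2)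
  have hordered : ∀ x ∈ D, ∀ y ∈ D, x < y → F x < F y := by
    intro x hx y hy hxy
    have h1 : F x < sInf {s | s ∈ S ∧ x < s} := (hF2 x hx.1 (by simpa using hx.2)).2
    have h2 : sInf {s | s ∈ S ∧ x < s} ≤ y :=
      csInf_le (hSfin.subset (fun z hz => hz.1)).bddBelow ⟨hy.1, hxy⟩
    have h3 : y < F y := (hF2 y hy.1 (by simpa using hy.2)).1
    linarith
  have hinj : InjOn F D := by
    intro x hx y hy hxy
    by_contra hne
    rcases lt_or_gt_of_ne hne with h | h
    · exact absurd hxy (ne_of_lt (hordered x hx y hy h))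
    · exact absurd hxy.symm (ne_of_lt (hordered y hy x hx h))
  have himg : F '' D ⊆ ZeroSet u := by rintro _ ⟨x, hx, rfl⟩; exact hmem x hx
  have hcard1 : D.ncard = (F '' D).ncard := (Set.ncard_image_of_injOn hinj).symm
  have hcard2 : (F '' D).ncard ≤ (ZeroSet u).ncard := Set.ncard_le_ncard himg hufin
  have hπZv : Real.pi ∉ ZeroSet v := fun h => lt_irrefl _ h.1.2
  have h0Zv : (0:ℝ) ∉ ZeroSet v := fun h => lt_irrefl _ h.1.1
  have hDeq : D = insert 0 (ZeroSet v) := by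
    rw [hD, hSdef]
    ext x
    simp only [mem_diff, mem_insert_iff, mem_singleton_iff]
    constructor
    · rintro ⟨h1 | h1 | h1, h2⟩
      · exact Or.inl h1
      · exact absurd h1 h2
      · exact Or.inr h1
    · rintro (rfl | h1)
      · exact ⟨Or.inl rfl, hπpos.ne⟩
      · exact ⟨Or.inr (Or.inr h1), fun h => hπZv (h ▸ h1)⟩
  have hDcard : D.ncard = k := by
    rw [hDeq, Set.ncard_insert_of_notMem h0Zv hvfin, hvcard]
    omega
  omega
end
end

section
/- Let q₀ ∈ L²(0,π), α ∈ ℝ, k ≥ 1, and suppose λ ∈ ℝ is the k-th eigenvalue of L[q₀] (i.e., L[q₀] admits an eigenfunction with eigenvalue λ, boundary parameter α, and exactly k−1 zeros in (0,π)). Then the nonlinear problem (NP_{+1}) (with potential q₀, spectral parameter λ and boundary parameter α) has no nonzero solution with k−1 or fewer zeros in (0,π), and the nonlinear problem (NP_{−1}) has no nonzero solution with k−1 or more zeros in (0,π). -/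
set_option maxHeartbeats 1000000


open MeasureTheory Set Real

noncomputable section

namespace SL

variable {u u' u'' v v' v'' w w' w'' z z' z'' : ℝ → ℝ} {a b d : ℝ}

lemma contOn (h : IsC2AC u u' u'') : ContinuousOn u (Set.Icc 0 Real.pi) :=
  fun x hx => (h.1 x hx).continuousWithinAt

lemma II_sub (h : IntervalIntegrable u'' volume 0 Real.pi) (ha : a ∈ Set.Icc (0:ℝ) Real.pi)
    (hb : b ∈ Set.Icc (0:ℝ) Real.pi) : IntervalIntegrable u'' volume a b := by
  apply h.mono_set
  rw [Set.uIcc_subset_uIcc_iff_mem]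
  constructor
  · rw [Set.uIcc_of_le Real.pi_pos.le]; exact ha
  · rw [Set.uIcc_of_le Real.pi_pos.le]; exact hb

lemma ftc1 (h : IsC2AC u u' u'') (ha : a ∈ Set.Icc (0:ℝ) Real.pi)
    (hb : b ∈ Set.Icc (0:ℝ) Real.pi) : u' b - u' a = ∫ t in a..b, u'' t := by
  rw [h.2.2.2 a ha, h.2.2.2 b hb]
  have h1 := II_sub h.2.2.1 (Set.left_mem_Icc.2 Real.pi_pos.le) ha
  have h2 := II_sub h.2.2.1 ha hb
  rw [← intervalIntegral.integral_add_adjacent_intervals h1 h2]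
  ring

lemma ftc2 (h : IsC2AC u u' u'') (ha : a ∈ Set.Icc (0:ℝ) Real.pi)
    (hb : b ∈ Set.Icc (0:ℝ) Real.pi) (hab : a ≤ b) :
    ∫ t in a..b, u' t = u b - u a := by
  apply intervalIntegral.integral_eq_sub_of_hasDeriv_right_of_le hab
  · exact (contOn h).mono (Set.Icc_subset_Icc ha.1 hb.2)
  · intro x hx
    have hxm : x ∈ Set.Icc (0:ℝ) Real.pi := ⟨ha.1.trans hx.1.le, hx.2.le.trans hb.2⟩
    refine (h.1 x hxm).mono_of_mem_nhdsWithin ?_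
    have : Set.Ioc x Real.pi ∈ nhdsWithin x (Set.Ioi x) :=
      Ioc_mem_nhdsGT_of_mem ⟨le_refl x, lt_of_lt_of_le hx.2 hb.2⟩
    exact Filter.mem_of_superset this (Set.Ioc_subset_Icc_self.trans
      (Set.Icc_subset_Icc (ha.1.trans hx.1.le) le_rfl))
  · exact ((h.2.1.mono (Set.Icc_subset_Icc ha.1 hb.2)).intervalIntegrable_of_Icc hab)


lemma tri_swap {a b : ℝ} (hab : a ≤ b) {f g : ℝ → ℝ} (hf : ContinuousOn f (Set.Icc a b))
    (hg : IntegrableOn g (Set.Ioc a b) volume) :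
    ∫ x in a..b, (∫ t in a..x, f t) * g x = ∫ t in a..b, f t * ∫ x in t..b, g x := by
  set μ := volume.restrict (Set.Ioc a b) with hμ
  have hfi : IntegrableOn f (Set.Ioc a b) volume :=
    (hf.integrableOn_Icc).mono_set Set.Ioc_subset_Icc_self
  set F : ℝ → ℝ → ℝ := fun x t => if t ≤ x then g x * f t else 0 with hF
  have hFint : Integrable (Function.uncurry F) (μ.prod μ) := by
    have h1 : Integrable (fun p : ℝ × ℝ => g p.1 * f p.2) (μ.prod μ) := hg.mul_prod hfi
    have h2 := h1.indicator (measurableSet_le measurable_snd measurable_fst)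
    have he : Function.uncurry F = ({p : ℝ × ℝ | p.2 ≤ p.1}).indicator
        (fun p => g p.1 * f p.2) := by
      funext p
      by_cases h : p.2 ≤ p.1 <;> simp [Function.uncurry, hF, Set.indicator_apply, h]
    rw [he]
    exact h2
  have key1 : ∀ x ∈ Set.Ioc a b, (∫ t in a..x, f t) * g x = ∫ t, F x t ∂μ := by
    intro x hx
    have e1 : ∀ t, F x t = (Set.Iic x).indicator (fun t => g x * f t) t := by
      intro t
      by_cases h : t ≤ x <;> simp [hF, Set.indicator_apply, h]
    calc (∫ t in a..x, f t) * g x = g x * ∫ t in Set.Ioc a x, f t := by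
          rw [intervalIntegral.integral_of_le hx.1.le]; ring
      _ = ∫ t in Set.Ioc a x, g x * f t := by rw [integral_const_mul]
      _ = ∫ t in Set.Ioc a b ∩ Set.Iic x, g x * f t := by
          rw [Set.Ioc_inter_Iic, min_eq_right hx.2]
      _ = ∫ t, (Set.Iic x).indicator (fun t => g x * f t) t ∂μ := by
          rw [setIntegral_indicator measurableSet_Iic]
      _ = ∫ t, F x t ∂μ := by simp_rw [← e1]
  have key2 : ∀ t ∈ Set.Ioc a b, (∫ x, F x t ∂μ) = f t * ∫ x in t..b, g x := by
    intro t ht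
    have e1 : ∀ x, F x t = (Set.Ici t).indicator (fun x => g x * f t) x := by
      intro x
      by_cases h : t ≤ x <;> simp [hF, Set.indicator_apply, h]
    have hset : Set.Ioc a b ∩ Set.Ici t = Set.Icc t b := by
      ext x
      simp only [Set.mem_inter_iff, Set.mem_Ioc, Set.mem_Ici, Set.mem_Icc]
      constructor
      · rintro ⟨⟨_, h2⟩, h3⟩; exact ⟨h3, h2⟩
      · rintro ⟨h1, h2⟩; exact ⟨⟨lt_of_lt_of_le ht.1 h1, h2⟩, h1⟩
    calc (∫ x, F x t ∂μ) = ∫ x, (Set.Ici t).indicator (fun x => g x * f t) x ∂μ := by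
          simp_rw [← e1]
      _ = ∫ x in Set.Ioc a b ∩ Set.Ici t, g x * f t := by
          rw [setIntegral_indicator measurableSet_Ici]
      _ = ∫ x in Set.Icc t b, g x * f t := by rw [hset]
      _ = (∫ x in Set.Icc t b, g x) * f t := by rw [integral_mul_const]
      _ = (∫ x in Set.Ioc t b, g x) * f t := by rw [integral_Icc_eq_integral_Ioc]
      _ = f t * ∫ x in t..b, g x := by
          rw [intervalIntegral.integral_of_le ht.2]; ring
  rw [intervalIntegral.integral_of_le hab, intervalIntegral.integral_of_le hab]
  calc ∫ x in Set.Ioc a b, (∫ t in a..x, f t) * g x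
      = ∫ x, (∫ t, F x t ∂μ) ∂μ := setIntegral_congr_fun measurableSet_Ioc key1
    _ = ∫ t, (∫ x, F x t ∂μ) ∂μ := integral_integral_swap hFint
    _ = ∫ t in Set.Ioc a b, f t * ∫ x in t..b, g x :=
        setIntegral_congr_fun measurableSet_Ioc key2

lemma partsA (hw : IsC2AC w w' w'') (hz : IsC2AC z z' z'')
    (ha : a ∈ Set.Icc (0:ℝ) Real.pi) (hb : b ∈ Set.Icc (0:ℝ) Real.pi) (hab : a ≤ b) :
    ∫ x in a..b, w x * z'' x
      = w a * (z' b - z' a) + z' b * (w b - w a) - ∫ x in a..b, w' x * z' x := by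
  have hsub : Set.Icc a b ⊆ Set.Icc (0:ℝ) Real.pi := Set.Icc_subset_Icc ha.1 hb.2
  have hmem : ∀ x ∈ Set.Icc a b, x ∈ Set.Icc (0:ℝ) Real.pi := fun x hx => hsub hx
  have huIcc : Set.uIcc a b = Set.Icc a b := Set.uIcc_of_le hab
  have hw'c : ContinuousOn w' (Set.Icc a b) := hw.2.1.mono hsub
  have hz''i : IntervalIntegrable z'' volume a b := II_sub hz.2.2.1 ha hb
  have step1 : ∫ x in a..b, w x * z'' x
      = ∫ x in a..b, (w a + ∫ t in a..x, w' t) * z'' x := by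
    apply intervalIntegral.integral_congr
    intro x hx
    rw [huIcc] at hx
    show w x * z'' x = (w a + ∫ t in a..x, w' t) * z'' x
    rw [ftc2 hw ha (hmem x hx) hx.1]; ring
  have i2 : IntervalIntegrable (fun x => (∫ t in a..x, w' t) * z'' x) volume a b := by
    apply hz''i.continuousOn_mul
    rw [huIcc]
    have := intervalIntegral.continuousOn_primitive_interval
      (f := w') (μ := volume) (a := a) (b := b) ?_
    · rw [huIcc] at this; exact this
    · rw [huIcc]; exact hw'c.integrableOn_Icc
  have i1 : IntervalIntegrable (fun x => w a * z'' x) volume a b := hz''i.const_mul _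
  have step2 : ∫ x in a..b, (w a + ∫ t in a..x, w' t) * z'' x
      = w a * (z' b - z' a) + ∫ x in a..b, (∫ t in a..x, w' t) * z'' x := by
    have : (fun x => (w a + ∫ t in a..x, w' t) * z'' x)
        = fun x => w a * z'' x + (∫ t in a..x, w' t) * z'' x := by
      funext x; ring
    rw [this, intervalIntegral.integral_add i1 i2, intervalIntegral.integral_const_mul,
      ← ftc1 hz ha hb]
  have step3 : ∫ x in a..b, (∫ t in a..x, w' t) * z'' x
      = ∫ t in a..b, w' t * (z' b - z' t) := by
    have hzint : IntegrableOn z'' (Set.Ioc a b) volume := by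
      have := hz''i.def'
      rwa [Set.uIoc_of_le hab] at this
    rw [tri_swap hab hw'c hzint]
    apply intervalIntegral.integral_congr
    intro t ht
    rw [huIcc] at ht
    show w' t * ∫ x in t..b, z'' x = w' t * (z' b - z' t)
    rw [← ftc1 hz (hmem t ht) hb]
  have iw' : IntervalIntegrable (fun t => w' t * z' b) volume a b := by
    apply ContinuousOn.intervalIntegrable; rw [huIcc]; exact hw'c.mul continuousOn_const
  have iw'z' : IntervalIntegrable (fun t => w' t * z' t) volume a b := by
    apply ContinuousOn.intervalIntegrable; rw [huIcc]
    exact hw'c.mul (hz.2.1.mono hsub)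
  have step4 : ∫ t in a..b, w' t * (z' b - z' t)
      = z' b * (w b - w a) - ∫ t in a..b, w' t * z' t := by
    have : (fun t => w' t * (z' b - z' t)) = fun t => w' t * z' b - w' t * z' t := by
      funext t; ring
    rw [this, intervalIntegral.integral_sub iw' iw'z', intervalIntegral.integral_mul_const,
      ftc2 hw ha hb hab]
    ring
  rw [step1, step2, step3, step4]; ring

lemma parts (hu : IsC2AC u u' u'') (hv : IsC2AC v v' v'')
    (ha : a ∈ Set.Icc (0:ℝ) Real.pi) (hb : b ∈ Set.Icc (0:ℝ) Real.pi) (hab : a ≤ b) :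
    ∫ x in a..b, (u x * v'' x - u'' x * v x)
      = (u b * v' b - u' b * v b) - (u a * v' a - u' a * v a) := by
  have hsub : Set.Icc a b ⊆ Set.Icc (0:ℝ) Real.pi := Set.Icc_subset_Icc ha.1 hb.2
  have huIcc : Set.uIcc a b = Set.Icc a b := Set.uIcc_of_le hab
  have iuv'' : IntervalIntegrable (fun x => u x * v'' x) volume a b := by
    apply (II_sub hv.2.2.1 ha hb).continuousOn_mul
    rw [huIcc]; exact (contOn hu).mono hsub
  have iu''v : IntervalIntegrable (fun x => u'' x * v x) volume a b := by
    apply (II_sub hu.2.2.1 ha hb).mul_continuousOn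
    rw [huIcc]; exact (contOn hv).mono hsub
  rw [intervalIntegral.integral_sub iuv'' iu''v]
  have h1 := partsA hu hv ha hb hab
  have h2 := partsA hv hu ha hb hab
  have e1 : ∫ x in a..b, u'' x * v x = ∫ x in a..b, v x * u'' x := by
    apply intervalIntegral.integral_congr; intro x _; exact mul_comm _ _
  have e2 : ∫ x in a..b, v' x * u' x = ∫ x in a..b, u' x * v' x := by
    apply intervalIntegral.integral_congr; intro x _; exact mul_comm _ _
  rw [h1, e1, h2, e2]; ring

lemma integral_congr_ae_sub {F G : ℝ → ℝ} (h : ∀ᵐ x ∂μI, F x = G x) (h0 : 0 ≤ a)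
    (hab : a ≤ b) (hbπ : b ≤ Real.pi) : ∫ x in a..b, F x = ∫ x in a..b, G x := by
  rw [intervalIntegral.integral_of_le hab, intervalIntegral.integral_of_le hab,
    integral_Ioc_eq_integral_Ioo, integral_Ioc_eq_integral_Ioo]
  apply integral_congr_ae
  have hsub : Set.Ioo a b ⊆ Set.Ioo 0 Real.pi := Set.Ioo_subset_Ioo h0 hbπ
  exact h.filter_mono (ae_mono (Measure.restrict_mono hsub le_rfl))

lemma nb (hab : a < b) : (nhdsWithin a (Set.Ioo a b)).NeBot := by
  rw [← mem_closure_iff_nhdsWithin_neBot, closure_Ioo (ne_of_lt hab)]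
  exact ⟨le_rfl, hab.le⟩

lemma nb' (hab : a < b) : (nhdsWithin b (Set.Ioo a b)).NeBot := by
  rw [← mem_closure_iff_nhdsWithin_neBot, closure_Ioo (ne_of_lt hab)]
  exact ⟨hab.le, le_rfl⟩

lemma deriv_nonneg_left (hd : HasDerivWithinAt u d (Set.Icc 0 Real.pi) a) (h0 : 0 ≤ a)
    (hbπ : b ≤ Real.pi) (hab : a < b) (hua : u a = 0)
    (hpos : ∀ x ∈ Set.Ioo a b, 0 < u x) : 0 ≤ d := by
  rw [hasDerivWithinAt_iff_tendsto_slope] at hd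
  have hsub : Set.Ioo a b ⊆ Set.Icc 0 Real.pi \ {a} := fun x hx =>
    ⟨⟨h0.trans hx.1.le, hx.2.le.trans hbπ⟩, ne_of_gt hx.1⟩
  have hne := nb hab
  have hT : Filter.Tendsto (slope u a) (nhdsWithin a (Set.Ioo a b)) (nhds d) :=
    hd.mono_left (nhdsWithin_mono a hsub)
  apply ge_of_tendsto hT
  filter_upwards [self_mem_nhdsWithin] with x hx
  rw [slope_def_field, hua, sub_zero]
  have := hpos x hx
  have h2 : 0 < x - a := sub_pos.2 hx.1
  positivity

lemma deriv_nonpos_right (hd : HasDerivWithinAt u d (Set.Icc 0 Real.pi) b) (h0 : 0 ≤ a)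
    (hbπ : b ≤ Real.pi) (hab : a < b) (hub : u b = 0)
    (hpos : ∀ x ∈ Set.Ioo a b, 0 < u x) : d ≤ 0 := by
  rw [hasDerivWithinAt_iff_tendsto_slope] at hd
  have hsub : Set.Ioo a b ⊆ Set.Icc 0 Real.pi \ {b} := fun x hx =>
    ⟨⟨h0.trans hx.1.le, hx.2.le.trans hbπ⟩, ne_of_lt hx.2⟩
  have hne := nb' hab
  have hT : Filter.Tendsto (slope u b) (nhdsWithin b (Set.Ioo a b)) (nhds d) :=
    hd.mono_left (nhdsWithin_mono b hsub)
  apply le_of_tendsto hT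
  filter_upwards [self_mem_nhdsWithin] with x hx
  rw [slope_def_field, hub, sub_zero]
  have h1 := hpos x hx
  have h2 : x - b < 0 := sub_neg.2 hx.2
  exact div_nonpos_of_nonneg_of_nonpos h1.le h2.le

lemma val_nonneg_left (hc : ContinuousOn u (Set.Icc 0 Real.pi)) (h0 : 0 ≤ a)
    (hbπ : b ≤ Real.pi) (hab : a < b) (hpos : ∀ x ∈ Set.Ioo a b, 0 < u x) : 0 ≤ u a := by
  have hsub : Set.Ioo a b ⊆ Set.Icc 0 Real.pi := fun x hx =>
    ⟨h0.trans hx.1.le, hx.2.le.trans hbπ⟩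
  have hne := nb hab
  have hT : Filter.Tendsto u (nhdsWithin a (Set.Ioo a b)) (nhds (u a)) :=
    ((hc a ⟨h0, hab.le.trans hbπ⟩).mono hsub).mono_left
      (nhdsWithin_mono a (fun x hx => hx))
  apply ge_of_tendsto hT
  filter_upwards [self_mem_nhdsWithin] with x hx
  exact (hpos x hx).le

lemma val_nonneg_right (hc : ContinuousOn u (Set.Icc 0 Real.pi)) (h0 : 0 ≤ a)
    (hbπ : b ≤ Real.pi) (hab : a < b) (hpos : ∀ x ∈ Set.Ioo a b, 0 < u x) : 0 ≤ u b := by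
  have hsub : Set.Ioo a b ⊆ Set.Icc 0 Real.pi := fun x hx =>
    ⟨h0.trans hx.1.le, hx.2.le.trans hbπ⟩
  have hne := nb' hab
  have hT : Filter.Tendsto u (nhdsWithin b (Set.Ioo a b)) (nhds (u b)) :=
    ((hc b ⟨h0.trans hab.le, hbπ⟩).mono hsub).mono_left
      (nhdsWithin_mono b (fun x hx => hx))
  apply ge_of_tendsto hT
  filter_upwards [self_mem_nhdsWithin] with x hx
  exact (hpos x hx).le

lemma sign_const (hc : ContinuousOn v (Set.Icc 0 Real.pi)) (h0 : 0 ≤ a)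
    (hbπ : b ≤ Real.pi) (hab : a < b) (hnz : ∀ x ∈ Set.Ioo a b, v x ≠ 0) :
    (∀ x ∈ Set.Ioo a b, 0 < v x) ∨ (∀ x ∈ Set.Ioo a b, v x < 0) := by
  have hsub : Set.Ioo a b ⊆ Set.Icc 0 Real.pi := fun x hx =>
    ⟨h0.trans hx.1.le, hx.2.le.trans hbπ⟩
  by_contra hcon
  push_neg at hcon
  obtain ⟨⟨x₁, hx₁, hx₁'⟩, ⟨x₂, hx₂, hx₂'⟩⟩ := hcon
  have hv1 : v x₁ < 0 := lt_of_le_of_ne hx₁' (hnz x₁ hx₁)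
  have hv2 : 0 < v x₂ := lt_of_le_of_ne hx₂' (Ne.symm (hnz x₂ hx₂))
  rcases lt_trichotomy x₁ x₂ with h | h | h
  · have hcc : ContinuousOn v (Set.Icc x₁ x₂) :=
      hc.mono (fun y hy => hsub ⟨hx₁.1.trans_le hy.1, hy.2.trans_lt hx₂.2⟩)
    have := intermediate_value_Ioo h.le hcc (a := x₁) (b := x₂)
    obtain ⟨z, hz, hvz⟩ := this ⟨hv1, hv2⟩
    exact hnz z ⟨hx₁.1.trans hz.1, hz.2.trans hx₂.2⟩ hvz
  · rw [h] at hv1; linarith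
  · have hcc : ContinuousOn v (Set.Icc x₂ x₁) :=
      hc.mono (fun y hy => hsub ⟨hx₂.1.trans_le hy.1, hy.2.trans_lt hx₁.2⟩)
    have := intermediate_value_Ioo' h.le hcc (a := x₂) (b := x₁)
    obtain ⟨z, hz, hvz⟩ := this ⟨hv1, hv2⟩
    exact hnz z ⟨hx₂.1.trans hz.1, hz.2.trans hx₁.2⟩ hvz

lemma W_zero {α u0 u0' v0 v0' : ℝ} (h1 : u0 * Real.cos α + u0' * Real.sin α = 0)
    (h2 : v0 * Real.cos α + v0' * Real.sin α = 0) : u0 * v0' - u0' * v0 = 0 := by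
  have hc : (u0 * v0' - u0' * v0) * Real.cos α = 0 := by linear_combination v0' * h1 - u0' * h2
  have hs : (u0 * v0' - u0' * v0) * Real.sin α = 0 := by linear_combination u0 * h2 - v0 * h1
  have hsc := Real.sin_sq_add_cos_sq α
  linear_combination (Real.sin α) * hs + (Real.cos α) * hc - (u0 * v0' - u0' * v0) * hsc

lemma wronskian {q₀ : ℝ → ℝ} {lam δ : ℝ}
    (huC : IsC2AC u u' u'')
    (hodeu : ∀ᵐ x ∂μI, -u'' x + q₀ x * u x = lam * u x + δ * u x ^ 3)
    (hvC : IsC2AC v v' v'')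
    (hodev : ∀ᵐ x ∂μI, -v'' x + q₀ x * v x = lam * v x)
    (ha : a ∈ Set.Icc (0:ℝ) Real.pi) (hb : b ∈ Set.Icc (0:ℝ) Real.pi) (hab : a ≤ b) :
    (u b * v' b - u' b * v b) - (u a * v' a - u' a * v a)
      = δ * ∫ x in a..b, u x ^ 3 * v x := by
  rw [← parts huC hvC ha hb hab]
  have hae : ∀ᵐ x ∂μI, u x * v'' x - u'' x * v x = δ * (u x ^ 3 * v x) := by
    filter_upwards [hodeu, hodev] with x h1 h2
    linear_combination v x * h1 - u x * h2
  rw [integral_congr_ae_sub hae ha.1 hab hb.2, intervalIntegral.integral_const_mul]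

lemma int_pos (huC : ContinuousOn u (Set.Icc 0 Real.pi))
    (hvC : ContinuousOn v (Set.Icc 0 Real.pi))
    (h0 : 0 ≤ a) (hab : a < b) (hbπ : b ≤ Real.pi)
    (hu : ∀ x ∈ Set.Ioo a b, 0 < u x) (hv : ∀ x ∈ Set.Ioo a b, 0 < v x) :
    0 < ∫ x in a..b, u x ^ 3 * v x := by
  have hsub : Set.Icc a b ⊆ Set.Icc (0:ℝ) Real.pi :=
    Set.Icc_subset_Icc h0 hbπ
  apply intervalIntegral.intervalIntegral_pos_of_pos_on
  · apply ContinuousOn.intervalIntegrable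
    rw [Set.uIcc_of_le hab.le]
    exact (((huC.mono hsub).pow 3).mul (hvC.mono hsub))
  · intro x hx
    have := hu x hx; have := hv x hx
    positivity
  · exact hab

lemma pos_contra {q₀ : ℝ → ℝ} {α lam δ : ℝ}
    (huC : IsC2AC u u' u'')
    (hodeu : ∀ᵐ x ∂μI, -u'' x + q₀ x * u x = lam * u x + δ * u x ^ 3)
    (hbcu : BC α u u')
    (hvC : IsC2AC v v' v'')
    (hodev : ∀ᵐ x ∂μI, -v'' x + q₀ x * v x = lam * v x)
    (hbcv : BC α v v')
    (h0 : 0 ≤ a) (hab : a < b) (hbπ : b ≤ Real.pi)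
    (hu : ∀ x ∈ Set.Ioo a b, 0 < u x) (hv : ∀ x ∈ Set.Ioo a b, 0 < v x)
    (hend : (0 < δ ∧ (a = 0 ∨ v a = 0) ∧ (b = Real.pi ∨ v b = 0)) ∨
            (δ < 0 ∧ (a = 0 ∨ u a = 0) ∧ (b = Real.pi ∨ u b = 0))) : False := by
  have ha : a ∈ Set.Icc (0:ℝ) Real.pi := ⟨h0, hab.le.trans hbπ⟩
  have hb : b ∈ Set.Icc (0:ℝ) Real.pi := ⟨h0.trans hab.le, hbπ⟩
  have key := wronskian huC hodeu hvC hodev ha hb hab.le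
  have hint := int_pos (contOn huC) (contOn hvC) h0 hab hbπ hu hv
  rcases hend with ⟨hδ, hva, hvb⟩ | ⟨hδ, hua, hub⟩
  · have hWa : 0 ≤ u a * v' a - u' a * v a := by
      rcases hva with rfl | hva
      · rw [W_zero hbcu.1 hbcv.1]
      · have h1 : 0 ≤ u a := val_nonneg_left (contOn huC) h0 hbπ hab hu
        have h2 : 0 ≤ v' a := deriv_nonneg_left (hvC.1 a ha) h0 hbπ hab hva hv
        rw [hva]; nlinarith
    have hWb : u b * v' b - u' b * v b ≤ 0 := by
      rcases hvb with rfl | hvb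
      · rw [W_zero hbcu.2 hbcv.2]
      · have h1 : 0 ≤ u b := val_nonneg_right (contOn huC) h0 hbπ hab hu
        have h2 : v' b ≤ 0 := deriv_nonpos_right (hvC.1 b hb) h0 hbπ hab hvb hv
        rw [hvb]; nlinarith
    nlinarith
  · have hWa : u a * v' a - u' a * v a ≤ 0 := by
      rcases hua with rfl | hua
      · rw [W_zero hbcu.1 hbcv.1]
      · have h1 : 0 ≤ u' a := deriv_nonneg_left (huC.1 a ha) h0 hbπ hab hua hu
        have h2 : 0 ≤ v a := val_nonneg_left (contOn hvC) h0 hbπ hab hv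
        rw [hua]; nlinarith
    have hWb : 0 ≤ u b * v' b - u' b * v b := by
      rcases hub with rfl | hub
      · rw [W_zero hbcu.2 hbcv.2]
      · have h1 : u' b ≤ 0 := deriv_nonpos_right (huC.1 b hb) h0 hbπ hab hub hu
        have h2 : 0 ≤ v b := val_nonneg_right (contOn hvC) h0 hbπ hab hv
        rw [hub]; nlinarith
    nlinarith

lemma C2AC_neg (h : IsC2AC u u' u'') :
    IsC2AC (fun x => -u x) (fun x => -u' x) (fun x => -u'' x) := by
  refine ⟨fun x hx => (h.1 x hx).neg, h.2.1.neg, h.2.2.1.neg, fun x hx => ?_⟩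
  show -u' x = -u' 0 + ∫ t in (0:ℝ)..x, -u'' t
  rw [intervalIntegral.integral_neg, h.2.2.2 x hx]
  ring

lemma BC_neg {α : ℝ} (h : BC α u u') : BC α (fun x => -u x) (fun x => -u' x) := by
  constructor
  · have := h.1; simp only; linarith
  · have := h.2; simp only; linarith

lemma ode_neg_u {q₀ : ℝ → ℝ} {lam δ : ℝ}
    (h : ∀ᵐ x ∂μI, -u'' x + q₀ x * u x = lam * u x + δ * u x ^ 3) :
    ∀ᵐ x ∂μI, -(fun x => -u'' x) x + q₀ x * (fun x => -u x) x
      = lam * (fun x => -u x) x + δ * ((fun x => -u x) x) ^ 3 := by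
  filter_upwards [h] with x hx
  linear_combination -hx

lemma ode_neg_v {q₀ : ℝ → ℝ} {lam : ℝ}
    (h : ∀ᵐ x ∂μI, -v'' x + q₀ x * v x = lam * v x) :
    ∀ᵐ x ∂μI, -(fun x => -v'' x) x + q₀ x * (fun x => -v x) x
      = lam * (fun x => -v x) x := by
  filter_upwards [h] with x hx
  linear_combination -hx

lemma gap_plus {q₀ : ℝ → ℝ} {α lam δ : ℝ} (hδ : 0 < δ)
    (huC : IsC2AC u u' u'')
    (hodeu : ∀ᵐ x ∂μI, -u'' x + q₀ x * u x = lam * u x + δ * u x ^ 3)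
    (hbcu : BC α u u')
    (hvC : IsC2AC v v' v'')
    (hodev : ∀ᵐ x ∂μI, -v'' x + q₀ x * v x = lam * v x)
    (hbcv : BC α v v')
    (h0 : 0 ≤ a) (hab : a < b) (hbπ : b ≤ Real.pi)
    (hva : a = 0 ∨ v a = 0) (hvb : b = Real.pi ∨ v b = 0)
    (hvnz : ∀ x ∈ Set.Ioo a b, v x ≠ 0) :
    ∃ y ∈ Set.Ioo a b, u y = 0 := by
  by_contra hcon
  push_neg at hcon
  have hvaN : a = 0 ∨ (fun x => -v x) a = 0 := by
    rcases hva with h | h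
    · exact Or.inl h
    · right; simp [h]
  have hvbN : b = Real.pi ∨ (fun x => -v x) b = 0 := by
    rcases hvb with h | h
    · exact Or.inl h
    · right; simp [h]
  rcases sign_const (contOn huC) h0 hbπ hab hcon with hup | hun <;>
    rcases sign_const (contOn hvC) h0 hbπ hab hvnz with hvp | hvn
  · exact pos_contra huC hodeu hbcu hvC hodev hbcv h0 hab hbπ hup hvp
      (Or.inl ⟨hδ, hva, hvb⟩)
  · exact pos_contra huC hodeu hbcu (C2AC_neg hvC) (ode_neg_v hodev) (BC_neg hbcv)
      h0 hab hbπ hup (fun x hx => by simpa using (hvn x hx))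
      (Or.inl ⟨hδ, hvaN, hvbN⟩)
  · exact pos_contra (C2AC_neg huC) (ode_neg_u hodeu) (BC_neg hbcu) hvC hodev hbcv
      h0 hab hbπ (fun x hx => by simpa using (hun x hx)) hvp
      (Or.inl ⟨hδ, hva, hvb⟩)
  · exact pos_contra (C2AC_neg huC) (ode_neg_u hodeu) (BC_neg hbcu)
      (C2AC_neg hvC) (ode_neg_v hodev) (BC_neg hbcv)
      h0 hab hbπ (fun x hx => by simpa using (hun x hx))
      (fun x hx => by simpa using (hvn x hx)) (Or.inl ⟨hδ, hvaN, hvbN⟩)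

lemma gap_minus {q₀ : ℝ → ℝ} {α lam δ : ℝ} (hδ : δ < 0)
    (huC : IsC2AC u u' u'')
    (hodeu : ∀ᵐ x ∂μI, -u'' x + q₀ x * u x = lam * u x + δ * u x ^ 3)
    (hbcu : BC α u u')
    (hvC : IsC2AC v v' v'')
    (hodev : ∀ᵐ x ∂μI, -v'' x + q₀ x * v x = lam * v x)
    (hbcv : BC α v v')
    (h0 : 0 ≤ a) (hab : a < b) (hbπ : b ≤ Real.pi)
    (hua : a = 0 ∨ u a = 0) (hub : b = Real.pi ∨ u b = 0)
    (hunz : ∀ x ∈ Set.Ioo a b, u x ≠ 0) :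
    ∃ y ∈ Set.Ioo a b, v y = 0 := by
  by_contra hcon
  push_neg at hcon
  have huaN : a = 0 ∨ (fun x => -u x) a = 0 := by
    rcases hua with h | h
    · exact Or.inl h
    · right; simp [h]
  have hubN : b = Real.pi ∨ (fun x => -u x) b = 0 := by
    rcases hub with h | h
    · exact Or.inl h
    · right; simp [h]
  rcases sign_const (contOn huC) h0 hbπ hab hunz with hup | hun <;>
    rcases sign_const (contOn hvC) h0 hbπ hab hcon with hvp | hvn
  · exact pos_contra huC hodeu hbcu hvC hodev hbcv h0 hab hbπ hup hvp
      (Or.inr ⟨hδ, hua, hub⟩)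
  · exact pos_contra huC hodeu hbcu (C2AC_neg hvC) (ode_neg_v hodev) (BC_neg hbcv)
      h0 hab hbπ hup (fun x hx => by simpa using (hvn x hx))
      (Or.inr ⟨hδ, hua, hub⟩)
  · exact pos_contra (C2AC_neg huC) (ode_neg_u hodeu) (BC_neg hbcu) hvC hodev hbcv
      h0 hab hbπ (fun x hx => by simpa using (hun x hx)) hvp
      (Or.inr ⟨hδ, huaN, hubN⟩)
  · exact pos_contra (C2AC_neg huC) (ode_neg_u hodeu) (BC_neg hbcu)
      (C2AC_neg hvC) (ode_neg_v hodev) (BC_neg hbcv)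
      h0 hab hbπ (fun x hx => by simpa using (hun x hx))
      (fun x hx => by simpa using (hvn x hx)) (Or.inr ⟨hδ, huaN, hubN⟩)

lemma count {Z Z' : Set ℝ} (hZ : Z.Finite) (hZ' : Z'.Finite)
    (hZsub : Z ⊆ Set.Ioo 0 Real.pi)
    (hgap : ∀ a b : ℝ, (a = 0 ∨ a ∈ Z) → (b = Real.pi ∨ b ∈ Z) → a < b →
      (∀ x ∈ Set.Ioo a b, x ∉ Z) → ∃ y ∈ Set.Ioo a b, y ∈ Z') :
    Z.ncard + 1 ≤ Z'.ncard := by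
  classical
  set D := insert (0:ℝ) Z with hD
  have hDfin : D.Finite := hZ.insert 0
  set nxt : ℝ → ℝ := fun a =>
    if h : (Z ∩ Set.Ioi a).Nonempty then sInf (Z ∩ Set.Ioi a) else Real.pi with hnxt
  have hbounds : ∀ a ∈ D, 0 ≤ a ∧ a < Real.pi := by
    intro a ha
    rcases ha with rfl | ha
    · exact ⟨le_rfl, Real.pi_pos⟩
    · exact ⟨(hZsub ha).1.le, (hZsub ha).2⟩
  have hlt : ∀ a ∈ D, a < nxt a := by
    intro a ha
    by_cases h : (Z ∩ Set.Ioi a).Nonempty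
    · have : nxt a = sInf (Z ∩ Set.Ioi a) := by simp only [hnxt, dif_pos h]
      rw [this]
      exact (Set.Nonempty.csInf_mem h (hZ.inter_of_left _)).2
    · have : nxt a = Real.pi := by simp only [hnxt, dif_neg h]
      rw [this]
      exact (hbounds a ha).2
  have hmemnxt : ∀ a, nxt a = Real.pi ∨ nxt a ∈ Z := by
    intro a
    by_cases h : (Z ∩ Set.Ioi a).Nonempty
    · have : nxt a = sInf (Z ∩ Set.Ioi a) := by simp only [hnxt, dif_pos h]
      rw [this]
      exact Or.inr (Set.Nonempty.csInf_mem h (hZ.inter_of_left _)).1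
    · have : nxt a = Real.pi := by simp only [hnxt, dif_neg h]
      rw [this]
      exact Or.inl rfl
  have hno : ∀ a, ∀ x ∈ Set.Ioo a (nxt a), x ∉ Z := by
    intro a x hx hxZ
    have hne : (Z ∩ Set.Ioi a).Nonempty := ⟨x, hxZ, hx.1⟩
    have : nxt a ≤ x := by
      have he : nxt a = sInf (Z ∩ Set.Ioi a) := by simp only [hnxt, dif_pos hne]
      rw [he]
      exact csInf_le (hZ.inter_of_left _).bddBelow ⟨hxZ, hx.1⟩
    exact absurd hx.2 (not_lt.2 this)
  have hnle : ∀ a ∈ D, ∀ b ∈ Z, a < b → nxt a ≤ b := by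
    intro a _ b hb hab
    have hne : (Z ∩ Set.Ioi a).Nonempty := ⟨b, hb, hab⟩
    have he : nxt a = sInf (Z ∩ Set.Ioi a) := by simp only [hnxt, dif_pos hne]
    rw [he]
    exact csInf_le (hZ.inter_of_left _).bddBelow ⟨hb, hab⟩
  have hex : ∀ a ∈ D, ∃ y ∈ Set.Ioo a (nxt a), y ∈ Z' := by
    intro a ha
    refine hgap a (nxt a) ?_ (hmemnxt a) (hlt a ha) (hno a)
    rcases ha with rfl | ha
    · exact Or.inl rfl
    · exact Or.inr ha
  set g : ℝ → ℝ := fun a => if ha : a ∈ D then (hex a ha).choose else 0 with hg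
  have hgmem : ∀ a ∈ D, g a ∈ Set.Ioo a (nxt a) ∧ g a ∈ Z' := by
    intro a ha
    have he : g a = (hex a ha).choose := by simp only [hg, dif_pos ha]
    rw [he]
    obtain ⟨h1, h2⟩ := (hex a ha).choose_spec
    exact ⟨h1, h2⟩
  have hinj : Set.InjOn g D := by
    intro a ha a' ha' heq
    by_contra hne
    rcases lt_or_gt_of_ne hne with h | h
    · have ha'Z : a' ∈ Z := by
        rcases ha' with rfl | h'
        · exact absurd h (not_lt.2 (hbounds a ha).1)
        · exact h'
      have h1 : g a < nxt a := ((hgmem a ha).1).2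
      have h2 : nxt a ≤ a' := hnle a ha a' ha'Z h
      have h3 : a' < g a' := ((hgmem a' ha').1).1
      rw [heq] at h1; linarith
    · have haZ : a ∈ Z := by
        rcases ha with rfl | h'
        · exact absurd h (not_lt.2 (hbounds a' ha').1)
        · exact h'
      have h1 : g a' < nxt a' := ((hgmem a' ha').1).2
      have h2 : nxt a' ≤ a := hnle a' ha' a haZ h
      have h3 : a < g a := ((hgmem a ha).1).1
      rw [heq] at h3; linarith
  have h0Z : (0:ℝ) ∉ Z := fun h => (lt_irrefl 0 (hZsub h).1)
  have hcard : D.ncard = Z.ncard + 1 := Set.ncard_insert_of_notMem h0Z hZ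
  have himg : g '' D ⊆ Z' := by
    rintro y ⟨a, ha, rfl⟩
    exact (hgmem a ha).2
  calc Z.ncard + 1 = D.ncard := hcard.symm
    _ = (g '' D).ncard := (Set.ncard_image_of_injOn hinj).symm
    _ ≤ Z'.ncard := Set.ncard_le_ncard himg hZ'

lemma muI_to_restrict {P : ℝ → Prop} (h : ∀ᵐ x ∂μI, P x) {p q : ℝ} (h0 : 0 ≤ p)
    (hπ : q ≤ Real.pi) : ∀ᵐ x ∂(volume.restrict (Set.Icc p q)), P x := by
  have h1 : volume.restrict (Set.Icc p q) = volume.restrict (Set.Ioo p q) :=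
    (Measure.restrict_congr_set Ioo_ae_eq_Icc).symm
  rw [h1]
  exact h.filter_mono (ae_mono (Measure.restrict_mono (Set.Ioo_subset_Ioo h0 hπ) le_rfl))

lemma contraction {c : ℝ → ℝ}
    (huC : IsC2AC u u' u'')
    (hc : ∀ᵐ x ∂μI, |u'' x| ≤ c x * |u x|) (hcnn : ∀ t, 0 ≤ c t)
    (hcint : ∀ p q : ℝ, p ∈ Set.Icc (0:ℝ) Real.pi → q ∈ Set.Icc (0:ℝ) Real.pi →
      IntervalIntegrable c volume p q)
    {p q : ℝ} (hp : p ∈ Set.Icc (0:ℝ) Real.pi) (hq : q ∈ Set.Icc (0:ℝ) Real.pi)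
    (hpq : p ≤ q)
    (hsmall : (∫ t in p..q, (1 + c t)) ≤ 1/2)
    (he : (u p = 0 ∧ u' p = 0) ∨ (u q = 0 ∧ u' q = 0)) :
    ∀ y ∈ Set.Icc p q, u y = 0 ∧ u' y = 0 := by
  have hsub : Set.Icc p q ⊆ Set.Icc (0:ℝ) Real.pi := Set.Icc_subset_Icc hp.1 hq.2
  have hmem : ∀ y ∈ Set.Icc p q, y ∈ Set.Icc (0:ℝ) Real.pi := fun y hy => hsub hy
  set g : ℝ → ℝ := fun x => |u x| + |u' x| with hgdef
  have hgc : ContinuousOn g (Set.Icc p q) :=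
    (((contOn huC).mono hsub).abs).add ((huC.2.1.mono hsub).abs)
  obtain ⟨xb, hxbmem, hxbmax⟩ :=
    IsCompact.exists_isMaxOn isCompact_Icc ⟨p, Set.left_mem_Icc.2 hpq⟩ hgc
  set G := g xb with hGdef
  have hGle : ∀ t ∈ Set.Icc p q, g t ≤ G := fun t ht => hxbmax ht
  have hGnn : 0 ≤ G := by
    have := abs_nonneg (u xb); have := abs_nonneg (u' xb); simp only [hGdef, hgdef]; linarith
  have hu'int : ∀ y₁ y₂, y₁ ∈ Set.Icc p q → y₂ ∈ Set.Icc p q →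
      IntervalIntegrable u' volume y₁ y₂ := by
    intro y₁ y₂ h₁ h₂
    apply ContinuousOn.intervalIntegrable
    apply (huC.2.1.mono hsub).mono
    have h3 : Set.uIcc y₁ y₂ ⊆ Set.uIcc p q := by
      rw [Set.uIcc_subset_uIcc_iff_mem, Set.uIcc_of_le hpq]
      exact ⟨h₁, h₂⟩
    rwa [Set.uIcc_of_le hpq] at h3
  have hu''int : ∀ y₁ y₂, y₁ ∈ Set.Icc p q → y₂ ∈ Set.Icc p q →
      IntervalIntegrable u'' volume y₁ y₂ := fun y₁ y₂ h₁ h₂ =>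
    II_sub huC.2.2.1 (hmem y₁ h₁) (hmem y₂ h₂)
  -- the key bound
  have key : ∀ y ∈ Set.Icc p q, g y ≤ G * ∫ t in p..q, (1 + c t) := by
    intro y hy
    -- choose direction based on he
    rcases he with ⟨hup, hu'p⟩ | ⟨huq, hu'q⟩
    · -- zero at left endpoint p ; integrate from p to y
      have hpy : p ≤ y := hy.1
      have h1 : |u y| ≤ ∫ t in p..y, G := by
        have e1 : u y = ∫ t in p..y, u' t := by
          rw [ftc2 huC (hmem p (Set.left_mem_Icc.2 hpq)) (hmem y hy) hpy, hup, sub_zero]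
        rw [e1]
        calc |∫ t in p..y, u' t| ≤ ∫ t in p..y, |u' t| :=
              intervalIntegral.abs_integral_le_integral_abs hpy
          _ ≤ ∫ t in p..y, G := by
              apply intervalIntegral.integral_mono_on hpy
                ((hu'int p y (Set.left_mem_Icc.2 hpq) hy).abs) intervalIntegrable_const
              intro t ht
              have := hGle t ⟨ht.1, ht.2.trans hy.2⟩
              simp only [hgdef] at this
              have := abs_nonneg (u t); linarith
      have h2 : |u' y| ≤ ∫ t in p..y, c t * G := by
        have e1 : u' y = ∫ t in p..y, u'' t := by
          have := ftc1 huC (hmem p (Set.left_mem_Icc.2 hpq)) (hmem y hy)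
          rw [hu'p] at this; linarith
        rw [e1]
        calc |∫ t in p..y, u'' t| ≤ ∫ t in p..y, |u'' t| :=
              intervalIntegral.abs_integral_le_integral_abs hpy
          _ ≤ ∫ t in p..y, c t * G := by
              apply intervalIntegral.integral_mono_ae_restrict hpy
                ((hu''int p y (Set.left_mem_Icc.2 hpq) hy).abs)
                (((hcint p y (hmem p (Set.left_mem_Icc.2 hpq)) (hmem y hy))).mul_const G)
              have hae := muI_to_restrict hc (p := p) (q := y) hp.1 (hy.2.trans hq.2)
              have haemem : ∀ᵐ x ∂(volume.restrict (Set.Icc p y)), x ∈ Set.Icc p y :=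
                ae_restrict_mem measurableSet_Icc
              filter_upwards [hae, haemem] with x h1x h2x
              calc |u'' x| ≤ c x * |u x| := h1x
                _ ≤ c x * G := by
                    apply mul_le_mul_of_nonneg_left _ (hcnn x)
                    have := hGle x ⟨h2x.1, h2x.2.trans hy.2⟩
                    simp only [hgdef] at this
                    have := abs_nonneg (u' x); linarith
      have h3 : (∫ t in p..y, G) + (∫ t in p..y, c t * G) ≤ G * ∫ t in p..q, (1 + c t) := by
        have e2 : (∫ t in p..y, G) + (∫ t in p..y, c t * G)
            = ∫ t in p..y, (1 + c t) * G := by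
          rw [← intervalIntegral.integral_add intervalIntegrable_const
            ((hcint p y (hmem p (Set.left_mem_Icc.2 hpq)) (hmem y hy)).mul_const G)]
          apply intervalIntegral.integral_congr
          intro t _; ring
        rw [e2]
        calc (∫ t in p..y, (1 + c t) * G) ≤ ∫ t in p..q, (1 + c t) * G := by
              apply intervalIntegral.integral_mono_interval le_rfl hpy hy.2
              · filter_upwards with t
                simp only [Pi.zero_apply]
                have := hcnn t; nlinarith [hGnn]
              · exact ((intervalIntegrable_const (c := (1:ℝ))).add
                  (hcint p q (hmem p (Set.left_mem_Icc.2 hpq)) hq)).mul_const G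
          _ = G * ∫ t in p..q, (1 + c t) := by
              rw [intervalIntegral.integral_mul_const]; ring
      simp only [hgdef]; linarith
    · -- zero at right endpoint q ; integrate from y to q
      have hyq : y ≤ q := hy.2
      have h1 : |u y| ≤ ∫ t in y..q, G := by
        have e1 : u y = -∫ t in y..q, u' t := by
          rw [ftc2 huC (hmem y hy) (hmem q (Set.right_mem_Icc.2 hpq)) hyq, huq]; ring
        rw [e1, abs_neg]
        calc |∫ t in y..q, u' t| ≤ ∫ t in y..q, |u' t| :=
              intervalIntegral.abs_integral_le_integral_abs hyq
          _ ≤ ∫ t in y..q, G := by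
              apply intervalIntegral.integral_mono_on hyq
                ((hu'int y q hy (Set.right_mem_Icc.2 hpq)).abs) intervalIntegrable_const
              intro t ht
              have := hGle t ⟨hy.1.trans ht.1, ht.2⟩
              simp only [hgdef] at this
              have := abs_nonneg (u t); linarith
      have h2 : |u' y| ≤ ∫ t in y..q, c t * G := by
        have e1 : u' y = -∫ t in y..q, u'' t := by
          have := ftc1 huC (hmem y hy) (hmem q (Set.right_mem_Icc.2 hpq))
          rw [hu'q] at this; linarith
        rw [e1, abs_neg]
        calc |∫ t in y..q, u'' t| ≤ ∫ t in y..q, |u'' t| :=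
              intervalIntegral.abs_integral_le_integral_abs hyq
          _ ≤ ∫ t in y..q, c t * G := by
              apply intervalIntegral.integral_mono_ae_restrict hyq
                ((hu''int y q hy (Set.right_mem_Icc.2 hpq)).abs)
                (((hcint y q (hmem y hy) (hmem q (Set.right_mem_Icc.2 hpq)))).mul_const G)
              have hae := muI_to_restrict hc (p := y) (q := q) (hp.1.trans hy.1) hq.2
              have haemem : ∀ᵐ x ∂(volume.restrict (Set.Icc y q)), x ∈ Set.Icc y q :=
                ae_restrict_mem measurableSet_Icc
              filter_upwards [hae, haemem] with x h1x h2x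
              calc |u'' x| ≤ c x * |u x| := h1x
                _ ≤ c x * G := by
                    apply mul_le_mul_of_nonneg_left _ (hcnn x)
                    have := hGle x ⟨hy.1.trans h2x.1, h2x.2⟩
                    simp only [hgdef] at this
                    have := abs_nonneg (u' x); linarith
      have h3 : (∫ t in y..q, G) + (∫ t in y..q, c t * G) ≤ G * ∫ t in p..q, (1 + c t) := by
        have e2 : (∫ t in y..q, G) + (∫ t in y..q, c t * G)
            = ∫ t in y..q, (1 + c t) * G := by
          rw [← intervalIntegral.integral_add intervalIntegrable_const
            ((hcint y q (hmem y hy) (hmem q (Set.right_mem_Icc.2 hpq))).mul_const G)]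
          apply intervalIntegral.integral_congr
          intro t _; ring
        rw [e2]
        calc (∫ t in y..q, (1 + c t) * G) ≤ ∫ t in p..q, (1 + c t) * G := by
              apply intervalIntegral.integral_mono_interval hy.1 hyq le_rfl
              · filter_upwards with t
                simp only [Pi.zero_apply]
                have := hcnn t; nlinarith [hGnn]
              · exact ((intervalIntegrable_const (c := (1:ℝ))).add
                  (hcint p q (hmem p (Set.left_mem_Icc.2 hpq)) hq)).mul_const G
          _ = G * ∫ t in p..q, (1 + c t) := by
              rw [intervalIntegral.integral_mul_const]; ring
      simp only [hgdef]; linarith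
  -- conclude G = 0
  have hG0 : G ≤ 0 := by
    have h1 := key xb hxbmem
    nlinarith [hGnn]
  intro y hy
  have h1 := hGle y hy
  have h2 := abs_nonneg (u y); have h3 := abs_nonneg (u' y)
  simp only [hgdef] at h1
  refine ⟨?_, ?_⟩
  · rw [← abs_eq_zero]; linarith
  · rw [← abs_eq_zero]; linarith

lemma coef {q₀ : ℝ → ℝ} (hq₀ : MemLp q₀ 2 μI) (C : ℝ) :
    ∀ p q : ℝ, p ∈ Set.Icc (0:ℝ) Real.pi → q ∈ Set.Icc (0:ℝ) Real.pi →
      IntervalIntegrable (fun t => |q₀ t| + C) volume p q := by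
  haveI : IsFiniteMeasure μI := by
    constructor
    rw [μI, Measure.restrict_apply_univ, Real.volume_Ioo]
    exact ENNReal.ofReal_lt_top
  have h1 : Integrable q₀ μI :=
    memLp_one_iff_integrable.1 (hq₀.mono_exponent (by norm_num))
  have h2 : IntegrableOn (fun t => |q₀ t| + C) (Set.Ioo 0 Real.pi) volume := by
    apply Integrable.add
    · exact h1.abs
    · have : IntegrableOn (fun _ => C) (Set.Ioo 0 Real.pi) volume := by
        rw [integrableOn_const_iff]
        right
        rw [Real.volume_Ioo]
        exact ENNReal.ofReal_lt_top
      exact this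
  intro p q hp hq
  rw [intervalIntegrable_iff]
  rw [show Set.uIoc p q = Set.Ioc (min p q) (max p q) from rfl]
  rw [IntegrableOn, ← Measure.restrict_congr_set Ioo_ae_eq_Ioc]
  exact h2.mono_set (Set.Ioo_subset_Ioo (le_min hp.1 hq.1) (max_le hp.2 hq.2))

lemma small_choice {c : ℝ → ℝ}
    (hcint : ∀ p q : ℝ, p ∈ Set.Icc (0:ℝ) Real.pi → q ∈ Set.Icc (0:ℝ) Real.pi →
      IntervalIntegrable c volume p q)
    {x₀ : ℝ} (hx₀ : x₀ ∈ Set.Icc (0:ℝ) Real.pi) :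
    ∃ ε > 0, ∀ p q : ℝ, p ∈ Set.Icc (0:ℝ) Real.pi → q ∈ Set.Icc (0:ℝ) Real.pi →
      p ≤ q → |p - x₀| < ε → |q - x₀| < ε → (∫ t in p..q, (1 + c t)) ≤ 1/2 := by
  have hint : ∀ p q : ℝ, p ∈ Set.Icc (0:ℝ) Real.pi → q ∈ Set.Icc (0:ℝ) Real.pi →
      IntervalIntegrable (fun t => 1 + c t) volume p q := fun p q hp hq =>
    (intervalIntegrable_const (c := (1:ℝ))).add (hcint p q hp hq)
  set h : ℝ → ℝ := fun x => ∫ t in (0:ℝ)..x, (1 + c t) with hhdef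
  have hcont : ContinuousOn h (Set.Icc 0 Real.pi) := by
    have h1 : IntegrableOn (fun t => 1 + c t) (Set.uIcc 0 Real.pi) volume := by
      rw [Set.uIcc_of_le Real.pi_pos.le, integrableOn_Icc_iff_integrableOn_Ioc]
      have := (hint 0 Real.pi (Set.left_mem_Icc.2 Real.pi_pos.le)
        (Set.right_mem_Icc.2 Real.pi_pos.le)).def'
      rwa [Set.uIoc_of_le Real.pi_pos.le] at this
    have := intervalIntegral.continuousOn_primitive_interval h1
    rwa [Set.uIcc_of_le Real.pi_pos.le] at this
  have hcw := hcont x₀ hx₀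
  rw [Metric.continuousWithinAt_iff] at hcw
  obtain ⟨ε, hε0, hball⟩ := hcw (1/5) (by norm_num)
  refine ⟨ε, hε0, ?_⟩
  intro p q hp hq hpq hpε hqε
  have hdp : dist (h p) (h x₀) < 1/5 := hball hp (by rwa [Real.dist_eq])
  have hdq : dist (h q) (h x₀) < 1/5 := hball hq (by rwa [Real.dist_eq])
  have hspl : ∫ t in p..q, (1 + c t) = h q - h p := by
    have := intervalIntegral.integral_add_adjacent_intervals
      (hint 0 p (Set.left_mem_Icc.2 Real.pi_pos.le) hp) (hint p q hp hq)
    simp only [hhdef]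
    linarith
  rw [hspl]
  rw [Real.dist_eq] at hdp hdq
  have h1 := abs_lt.1 hdp
  have h2 := abs_lt.1 hdq
  linarith [h1.1, h1.2, h2.1, h2.2]

lemma zero_everywhere {c : ℝ → ℝ}
    (huC : IsC2AC u u' u'')
    (hc : ∀ᵐ x ∂μI, |u'' x| ≤ c x * |u x|) (hcnn : ∀ t, 0 ≤ c t)
    (hcint : ∀ p q : ℝ, p ∈ Set.Icc (0:ℝ) Real.pi → q ∈ Set.Icc (0:ℝ) Real.pi →
      IntervalIntegrable c volume p q)
    {x₀ : ℝ} (hx₀ : x₀ ∈ Set.Icc (0:ℝ) Real.pi) (h00 : u x₀ = 0) (h01 : u' x₀ = 0) :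
    ∀ x ∈ Set.Icc (0:ℝ) Real.pi, u x = 0 := by
  -- right propagation
  have right : ∀ y ∈ Set.Icc x₀ Real.pi, u y = 0 ∧ u' y = 0 := by
    set B : Set ℝ := {b | b ∈ Set.Icc x₀ Real.pi ∧ ∀ y ∈ Set.Icc x₀ b, u y = 0 ∧ u' y = 0}
      with hBdef
    have hx₀B : x₀ ∈ B := by
      refine ⟨⟨le_rfl, hx₀.2⟩, ?_⟩
      intro y hy
      have : y = x₀ := le_antisymm hy.2 hy.1
      rw [this]; exact ⟨h00, h01⟩
    have hBne : B.Nonempty := ⟨x₀, hx₀B⟩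
    have hBbdd : BddAbove B := ⟨Real.pi, fun b hb => hb.1.2⟩
    set s := sSup B with hsdef
    have hx₀s : x₀ ≤ s := le_csSup hBbdd hx₀B
    have hsπ : s ≤ Real.pi := csSup_le hBne (fun b hb => hb.1.2)
    have hsmem : s ∈ Set.Icc (0:ℝ) Real.pi := ⟨hx₀.1.trans hx₀s, hsπ⟩
    have hstep1 : ∀ y ∈ Set.Ico x₀ s, u y = 0 ∧ u' y = 0 := by
      intro y hy
      obtain ⟨b, hbB, hyb⟩ := exists_lt_of_lt_csSup hBne hy.2
      exact hbB.2 y ⟨hy.1, hyb.le⟩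
    have hs0 : u s = 0 ∧ u' s = 0 := by
      rcases eq_or_lt_of_le hx₀s with heq | hlt
      · rw [← heq]; exact ⟨h00, h01⟩
      · have hne : (nhdsWithin s (Set.Ico x₀ s)).NeBot := by
          rw [← mem_closure_iff_nhdsWithin_neBot, closure_Ico (ne_of_lt hlt)]
          exact ⟨hx₀s, le_rfl⟩
        have hsubI : Set.Ico x₀ s ⊆ Set.Icc (0:ℝ) Real.pi := fun y hy =>
          ⟨hx₀.1.trans hy.1, hy.2.le.trans hsπ⟩
        constructor
        · have hT : Filter.Tendsto u (nhdsWithin s (Set.Ico x₀ s)) (nhds (u s)) :=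
            ((contOn huC s hsmem).mono hsubI).mono_left (nhdsWithin_mono s (fun x hx => hx))
          have hT0 : Filter.Tendsto u (nhdsWithin s (Set.Ico x₀ s)) (nhds 0) := by
            apply Filter.Tendsto.congr' _ tendsto_const_nhds
            filter_upwards [self_mem_nhdsWithin] with y hy
            exact ((hstep1 y hy).1).symm
          exact tendsto_nhds_unique hT hT0
        · have hT : Filter.Tendsto u' (nhdsWithin s (Set.Ico x₀ s)) (nhds (u' s)) :=
            ((huC.2.1 s hsmem).mono hsubI).mono_left (nhdsWithin_mono s (fun x hx => hx))
          have hT0 : Filter.Tendsto u' (nhdsWithin s (Set.Ico x₀ s)) (nhds 0) := by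
            apply Filter.Tendsto.congr' _ tendsto_const_nhds
            filter_upwards [self_mem_nhdsWithin] with y hy
            exact ((hstep1 y hy).2).symm
          exact tendsto_nhds_unique hT hT0
    have hsB : s ∈ B := by
      refine ⟨⟨hx₀s, hsπ⟩, ?_⟩
      intro y hy
      rcases eq_or_lt_of_le hy.2 with heq | hlt
      · rw [heq]; exact hs0
      · exact hstep1 y ⟨hy.1, hlt⟩
    have hsfinal : s = Real.pi := by
      by_contra hne
      have hlt : s < Real.pi := lt_of_le_of_ne hsπ hne
      obtain ⟨ε, hε0, hsm⟩ := small_choice hcint hsmem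
      set q := min (s + ε/2) Real.pi with hqdef
      have hsq : s < q := lt_min (by linarith) hlt
      have hqπ : q ≤ Real.pi := min_le_right _ _
      have hqmem : q ∈ Set.Icc (0:ℝ) Real.pi := ⟨hsmem.1.trans hsq.le, hqπ⟩
      have hqε : |q - s| < ε := by
        rw [abs_lt]
        constructor
        · linarith
        · have : q ≤ s + ε/2 := min_le_left _ _
          linarith
      have hall := contraction huC hc hcnn hcint hsmem hqmem hsq.le
        (hsm s q hsmem hqmem hsq.le (by simp [abs_lt]; linarith) hqε)
        (Or.inl hs0)
      have hqB : q ∈ B := by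
        refine ⟨⟨hx₀s.trans hsq.le, hqπ⟩, ?_⟩
        intro y hy
        rcases le_or_gt y s with h | h
        · exact hsB.2 y ⟨hy.1, h⟩
        · exact hall y ⟨h.le, hy.2⟩
      have : q ≤ s := le_csSup hBbdd hqB
      linarith
    intro y hy
    rw [← hsfinal] at hy
    exact hsB.2 y hy
  -- left propagation
  have left : ∀ y ∈ Set.Icc 0 x₀, u y = 0 ∧ u' y = 0 := by
    set B : Set ℝ := {b | b ∈ Set.Icc 0 x₀ ∧ ∀ y ∈ Set.Icc b x₀, u y = 0 ∧ u' y = 0}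
      with hBdef
    have hx₀B : x₀ ∈ B := by
      refine ⟨⟨hx₀.1, le_rfl⟩, ?_⟩
      intro y hy
      have : y = x₀ := le_antisymm hy.2 hy.1
      rw [this]; exact ⟨h00, h01⟩
    have hBne : B.Nonempty := ⟨x₀, hx₀B⟩
    have hBbdd : BddBelow B := ⟨0, fun b hb => hb.1.1⟩
    set s := sInf B with hsdef
    have hx₀s : s ≤ x₀ := csInf_le hBbdd hx₀B
    have hs0' : 0 ≤ s := le_csInf hBne (fun b hb => hb.1.1)
    have hsmem : s ∈ Set.Icc (0:ℝ) Real.pi := ⟨hs0', hx₀s.trans hx₀.2⟩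
    have hstep1 : ∀ y ∈ Set.Ioc s x₀, u y = 0 ∧ u' y = 0 := by
      intro y hy
      obtain ⟨b, hbB, hyb⟩ := exists_lt_of_csInf_lt hBne hy.1
      exact hbB.2 y ⟨hyb.le, hy.2⟩
    have hs0 : u s = 0 ∧ u' s = 0 := by
      rcases eq_or_lt_of_le hx₀s with heq | hlt
      · rw [heq]; exact ⟨h00, h01⟩
      · have hne : (nhdsWithin s (Set.Ioc s x₀)).NeBot := by
          rw [← mem_closure_iff_nhdsWithin_neBot, closure_Ioc (ne_of_lt hlt)]
          exact ⟨le_rfl, hx₀s⟩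
        have hsubI : Set.Ioc s x₀ ⊆ Set.Icc (0:ℝ) Real.pi := fun y hy =>
          ⟨hs0'.trans hy.1.le, hy.2.trans hx₀.2⟩
        constructor
        · have hT : Filter.Tendsto u (nhdsWithin s (Set.Ioc s x₀)) (nhds (u s)) :=
            ((contOn huC s hsmem).mono hsubI).mono_left (nhdsWithin_mono s (fun x hx => hx))
          have hT0 : Filter.Tendsto u (nhdsWithin s (Set.Ioc s x₀)) (nhds 0) := by
            apply Filter.Tendsto.congr' _ tendsto_const_nhds
            filter_upwards [self_mem_nhdsWithin] with y hy
            exact ((hstep1 y hy).1).symm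
          exact tendsto_nhds_unique hT hT0
        · have hT : Filter.Tendsto u' (nhdsWithin s (Set.Ioc s x₀)) (nhds (u' s)) :=
            ((huC.2.1 s hsmem).mono hsubI).mono_left (nhdsWithin_mono s (fun x hx => hx))
          have hT0 : Filter.Tendsto u' (nhdsWithin s (Set.Ioc s x₀)) (nhds 0) := by
            apply Filter.Tendsto.congr' _ tendsto_const_nhds
            filter_upwards [self_mem_nhdsWithin] with y hy
            exact ((hstep1 y hy).2).symm
          exact tendsto_nhds_unique hT hT0
    have hsB : s ∈ B := by
      refine ⟨⟨hs0', hx₀s⟩, ?_⟩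
      intro y hy
      rcases eq_or_lt_of_le hy.1 with heq | hlt
      · rw [← heq]; exact hs0
      · exact hstep1 y ⟨hlt, hy.2⟩
    have hsfinal : s = 0 := by
      by_contra hne
      have hlt : 0 < s := lt_of_le_of_ne hs0' (Ne.symm hne)
      obtain ⟨ε, hε0, hsm⟩ := small_choice hcint hsmem
      set p := max (s - ε/2) 0 with hpdef
      have hps : p < s := max_lt (by linarith) hlt
      have hp0 : 0 ≤ p := le_max_right _ _
      have hpmem : p ∈ Set.Icc (0:ℝ) Real.pi := ⟨hp0, hps.le.trans hsmem.2⟩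
      have hpε : |p - s| < ε := by
        rw [abs_lt]
        constructor
        · have : s - ε/2 ≤ p := le_max_left _ _
          linarith
        · linarith
      have hall := contraction huC hc hcnn hcint hpmem hsmem hps.le
        (hsm p s hpmem hsmem hps.le hpε (by simp [abs_lt]; linarith))
        (Or.inr hs0)
      have hpB : p ∈ B := by
        refine ⟨⟨hp0, hps.le.trans hx₀s⟩, ?_⟩
        intro y hy
        rcases le_or_gt s y with h | h
        · exact hsB.2 y ⟨h, hy.2⟩
        · exact hall y ⟨hy.1, h.le⟩
      have : s ≤ p := csInf_le hBbdd hpB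
      linarith
    intro y hy
    rw [← hsfinal] at hy
    exact hsB.2 y hy
  intro x hx
  rcases le_or_gt x x₀ with h | h
  · exact (left x ⟨hx.1, h⟩).1
  · exact (right x ⟨h.le, hx.2⟩).1

lemma acc_double (huC : IsC2AC u u' u'') {Z : Set ℝ} (hZsub : Z ⊆ Set.Ioo 0 Real.pi)
    (hZu : ∀ x ∈ Z, u x = 0) (hinf : ¬ Z.Finite) :
    ∃ x ∈ Set.Icc (0:ℝ) Real.pi, u x = 0 ∧ u' x = 0 := by
  have hZinf : Z.Infinite := hinf
  set e := hZinf.natEmbedding with hedef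
  set x : ℕ → ℝ := fun n => (e n : ℝ) with hxdef
  have hxmem : ∀ n, x n ∈ Set.Icc (0:ℝ) Real.pi := fun n =>
    Set.Ioo_subset_Icc_self (hZsub (e n).2)
  have hxZ : ∀ n, x n ∈ Z := fun n => (e n).2
  have hxinj : Function.Injective x := by
    intro m n h
    have := Subtype.coe_injective (a₁ := e m) (a₂ := e n) h
    exact e.injective this
  obtain ⟨x₀, hx₀mem, φ, hφ, hT⟩ := isCompact_Icc.tendsto_subseq hxmem
  set y : ℕ → ℝ := x ∘ φ with hydef
  have hyinj : Function.Injective y := hxinj.comp hφ.injective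
  have hyne : ∀ᶠ n in Filter.atTop, y n ≠ x₀ := by
    have hfin : {n | y n = x₀}.Finite := by
      apply Set.Subsingleton.finite
      intro m hm n hn
      exact hyinj (hm.trans hn.symm)
    have h2 := hfin.eventually_cofinite_notMem
    rw [Nat.cofinite_eq_atTop] at h2
    exact h2
  have hu0 : u x₀ = 0 := by
    have hT1 : Filter.Tendsto (fun n => u (y n)) Filter.atTop (nhds (u x₀)) := by
      have hcw : ContinuousWithinAt u (Set.Icc 0 Real.pi) x₀ := contOn huC x₀ hx₀mem
      apply hcw.tendsto.comp
      apply tendsto_nhdsWithin_of_tendsto_nhds_of_eventually_within _ hT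
      exact Filter.Eventually.of_forall (fun n => hxmem (φ n))
    have hT2 : Filter.Tendsto (fun n => u (y n)) Filter.atTop (nhds 0) := by
      apply Filter.Tendsto.congr' _ tendsto_const_nhds
      filter_upwards with n
      exact (hZu (y n) (hxZ (φ n))).symm
    exact tendsto_nhds_unique hT1 hT2
  refine ⟨x₀, hx₀mem, hu0, ?_⟩
  have hd := huC.1 x₀ hx₀mem
  rw [hasDerivWithinAt_iff_tendsto_slope] at hd
  have hT1 : Filter.Tendsto (fun n => slope u x₀ (y n)) Filter.atTop (nhds (u' x₀)) := by
    apply hd.comp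
    apply tendsto_nhdsWithin_of_tendsto_nhds_of_eventually_within _ hT
    filter_upwards [hyne] with n hn
    exact ⟨hxmem (φ n), hn⟩
  have hT2 : Filter.Tendsto (fun n => slope u x₀ (y n)) Filter.atTop (nhds 0) := by
    apply Filter.Tendsto.congr' _ tendsto_const_nhds
    filter_upwards with n
    rw [slope_def_field, hZu (y n) (hxZ (φ n)), hu0]
    simp
  exact tendsto_nhds_unique hT1 hT2

lemma NP_no_double {q₀ : ℝ → ℝ} {lam δ : ℝ} (hq₀ : MemLp q₀ 2 μI)
    (huC : IsC2AC u u' u'')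
    (hodeu : ∀ᵐ x ∂μI, -u'' x + q₀ x * u x = lam * u x + δ * u x ^ 3)
    (hnz : Nonzero u)
    {x₀ : ℝ} (hx₀ : x₀ ∈ Set.Icc (0:ℝ) Real.pi) (h00 : u x₀ = 0) (h01 : u' x₀ = 0) :
    False := by
  obtain ⟨xm, hxmmem, hmax⟩ := IsCompact.exists_isMaxOn isCompact_Icc
    ⟨0, Set.left_mem_Icc.2 Real.pi_pos.le⟩ ((contOn huC).abs)
  set M := |u xm| with hMdef
  have hM : ∀ x ∈ Set.Icc (0:ℝ) Real.pi, |u x| ≤ M := fun x hx => hmax hx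
  have hM0 : 0 ≤ M := abs_nonneg _
  set c : ℝ → ℝ := fun t => |q₀ t| + (|lam| + |δ| * M^2) with hcdef
  have hcnn : ∀ t, 0 ≤ c t := by
    intro t
    have := abs_nonneg (q₀ t); have := abs_nonneg lam; have := abs_nonneg δ
    simp only [hcdef]; nlinarith
  have hcint := coef hq₀ (|lam| + |δ| * M^2)
  have hc : ∀ᵐ x ∂μI, |u'' x| ≤ c x * |u x| := by
    have hmem : ∀ᵐ x ∂μI, x ∈ Set.Ioo (0:ℝ) Real.pi := ae_restrict_mem measurableSet_Ioo
    filter_upwards [hodeu, hmem] with x hx hxm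
    have hxIcc : x ∈ Set.Icc (0:ℝ) Real.pi := Set.Ioo_subset_Icc_self hxm
    have h1 : u'' x = q₀ x * u x + -(lam * u x) + -(δ * u x ^ 3) := by
      linear_combination -hx
    have t1 : |u'' x| ≤ |q₀ x * u x| + |lam * u x| + |δ * u x ^ 3| := by
      rw [h1]
      calc |q₀ x * u x + -(lam * u x) + -(δ * u x ^ 3)|
          ≤ |q₀ x * u x + -(lam * u x)| + |-(δ * u x ^ 3)| := abs_add_le _ _
        _ ≤ |q₀ x * u x| + |-(lam * u x)| + |-(δ * u x ^ 3)| := by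
            have := abs_add_le (q₀ x * u x) (-(lam * u x)); linarith
        _ = |q₀ x * u x| + |lam * u x| + |δ * u x ^ 3| := by rw [abs_neg, abs_neg]
    have e1 : |q₀ x * u x| = |q₀ x| * |u x| := abs_mul _ _
    have e2 : |lam * u x| = |lam| * |u x| := abs_mul _ _
    have e3 : |δ * u x ^ 3| = |δ| * (|u x| ^ 2 * |u x|) := by
      rw [abs_mul, abs_pow]; ring
    have hMx := hM x hxIcc
    have habs := abs_nonneg (u x)
    have hδa := abs_nonneg δ
    have hsq : |u x| ^ 2 ≤ M ^ 2 := by nlinarith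
    have h4 : |u x| ^ 2 * |u x| ≤ M ^ 2 * |u x| := mul_le_mul_of_nonneg_right hsq habs
    have : |δ| * (|u x| ^ 2 * |u x|) ≤ |δ| * M ^ 2 * |u x| := by
      calc |δ| * (|u x| ^ 2 * |u x|) ≤ |δ| * (M ^ 2 * |u x|) :=
            mul_le_mul_of_nonneg_left h4 hδa
        _ = |δ| * M ^ 2 * |u x| := by ring
    simp only [hcdef]
    nlinarith
  have hzero := zero_everywhere huC hc hcnn hcint hx₀ h00 h01
  obtain ⟨x, hx, hux⟩ := hnz
  exact hux (hzero x hx)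

lemma finite_zeroset {q₀ : ℝ → ℝ} {lam δ : ℝ} (hq₀ : MemLp q₀ 2 μI)
    (huC : IsC2AC u u' u'')
    (hodeu : ∀ᵐ x ∂μI, -u'' x + q₀ x * u x = lam * u x + δ * u x ^ 3)
    (hnz : Nonzero u) {Z : Set ℝ} (hZsub : Z ⊆ Set.Ioo 0 Real.pi)
    (hZu : ∀ x ∈ Z, u x = 0) : Z.Finite := by
  by_contra hinf
  obtain ⟨x₀, hx₀, h00, h01⟩ := acc_double huC hZsub hZu hinf
  exact NP_no_double hq₀ huC hodeu hnz hx₀ h00 h01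

end SL

/-- If lam is the k-th eigenvalue of L[q₀], then (NP_{+1}) has no nonzero solution with
k-1 or fewer zeros in (0,π), and (NP_{-1}) has no nonzero solution with k-1 or more
zeros in (0,π). -/
theorem stmt5 (q₀ : ℝ → ℝ) (hq₀ : MemL2 q₀) (α : ℝ) (k : ℕ) (hk : 1 ≤ k)
    (lam : ℝ) (hlam : HasEigenK q₀ α lam k) :
    (¬ ∃ u u' u'', IsNPSol q₀ α lam 1 u u' u'' ∧ Nonzero u ∧
        (ZeroSet u).Finite ∧ (ZeroSet u).ncard ≤ k - 1) ∧
    (¬ ∃ u u' u'', IsNPSol q₀ α lam (-1) u u' u'' ∧ Nonzero u ∧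
        (¬ (ZeroSet u).Finite ∨ k - 1 ≤ (ZeroSet u).ncard)) := by
  obtain ⟨v, v', v'', hveig, hvfin, hvcard⟩ := hlam
  obtain ⟨hvC, hvL2, hvode, hvnz, hvbc⟩ := hveig
  have hZvsub : ZeroSet v ⊆ Set.Ioo 0 Real.pi := fun x hx => hx.1
  constructor
  · rintro ⟨u, u', u'', ⟨huC, huode, hubc⟩, hunz, hufin, hucard⟩
    have hZusub : ZeroSet u ⊆ Set.Ioo 0 Real.pi := fun x hx => hx.1
    have hcount := SL.count hvfin hufin hZvsub ?gap
    case gap =>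
      intro a b ha hb hab hno
      have h0a : 0 ≤ a := by
        rcases ha with rfl | h
        · exact le_rfl
        · exact (hZvsub h).1.le
      have hbπ : b ≤ Real.pi := by
        rcases hb with rfl | h
        · exact le_rfl
        · exact (hZvsub h).2.le
      have hva : a = 0 ∨ v a = 0 := by
        rcases ha with rfl | h
        · exact Or.inl rfl
        · exact Or.inr h.2
      have hvb : b = Real.pi ∨ v b = 0 := by
        rcases hb with rfl | h
        · exact Or.inl rfl
        · exact Or.inr h.2
      have hioo : Set.Ioo a b ⊆ Set.Ioo 0 Real.pi := Set.Ioo_subset_Ioo h0a hbπ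
      have hvnzI : ∀ x ∈ Set.Ioo a b, v x ≠ 0 := fun x hx hvx => hno x hx ⟨hioo hx, hvx⟩
      obtain ⟨y, hy, huy⟩ := SL.gap_plus (by norm_num : (0:ℝ) < 1) huC huode hubc
        hvC hvode hvbc h0a hab hbπ hva hvb hvnzI
      exact ⟨y, hy, ⟨hioo hy, huy⟩⟩
    rw [hvcard] at hcount
    omega
  · rintro ⟨u, u', u'', ⟨huC, huode, hubc⟩, hunz, hcase⟩
    have hZusub : ZeroSet u ⊆ Set.Ioo 0 Real.pi := fun x hx => hx.1
    have hufin : (ZeroSet u).Finite :=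
      SL.finite_zeroset hq₀ huC huode hunz hZusub (fun x hx => hx.2)
    have hucard : k - 1 ≤ (ZeroSet u).ncard := by
      rcases hcase with h | h
      · exact absurd hufin h
      · exact h
    have hcount := SL.count hufin hvfin hZusub ?gap2
    case gap2 =>
      intro a b ha hb hab hno
      have h0a : 0 ≤ a := by
        rcases ha with rfl | h
        · exact le_rfl
        · exact (hZusub h).1.le
      have hbπ : b ≤ Real.pi := by
        rcases hb with rfl | h
        · exact le_rfl
        · exact (hZusub h).2.le
      have hua : a = 0 ∨ u a = 0 := by
        rcases ha with rfl | h
        · exact Or.inl rfl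
        · exact Or.inr h.2
      have hub : b = Real.pi ∨ u b = 0 := by
        rcases hb with rfl | h
        · exact Or.inl rfl
        · exact Or.inr h.2
      have hioo : Set.Ioo a b ⊆ Set.Ioo 0 Real.pi := Set.Ioo_subset_Ioo h0a hbπ
      have hunzI : ∀ x ∈ Set.Ioo a b, u x ≠ 0 := fun x hx hux => hno x hx ⟨hioo hx, hux⟩
      obtain ⟨y, hy, hvy⟩ := SL.gap_minus (by norm_num : (-1:ℝ) < 0) huC huode hubc
        hvC hvode hvbc h0a hab hbπ hua hub hunzI
      exact ⟨y, hy, ⟨hioo hy, hvy⟩⟩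
    rw [hvcard] at hcount
    omega
end
end

section
/- Let ψ_i(x) := sin(i x) for integers i ≥ 1, and for a > 0 set s_i(a) := √(i² + a) and ρ(a) := Σ_{i=1}^∞ 1/(i² + a). There exists a constant C < ∞, independent of a, such that for all q, f, g ∈ L²(0,π), writing f_i := (2/π)∫₀^π f(x) ψ_i(x) dx and g_j := (2/π)∫₀^π g(x) ψ_j(x) dx for the sine-Fourier coefficients, one has Σ_{i=1}^∞ Σ_{j=1}^∞ (|f_i| |g_j| / (s_i(a) s_j(a))) · |∫₀^π q(x) ψ_i(x) ψ_j(x) dx| ≤ C ρ(a) ‖q‖_{L²(0,π)} ‖f‖_{L²(0,π)} ‖g‖_{L²(0,π)}. -/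
open MeasureTheory Set Real

noncomputable section

/-- The i-th Dirichlet eigenfunction sin(i x) of -d²/dx² on (0,π), indexed by i ≥ 1
(here the index n : ℕ corresponds to i = n+1). -/
def ψs (n : ℕ) : ℝ → ℝ := fun x => Real.sin (((n : ℝ) + 1) * x)

/-- The sine-Fourier coefficient of f with respect to sin((n+1) x). -/
def sineCoeff (f : ℝ → ℝ) (n : ℕ) : ℝ :=
  (2 / Real.pi) * ∫ x in Set.Ioo (0:ℝ) Real.pi, f x * ψs n x

/-- s_i(a) = √(i² + a), with i = n+1. -/
def sa (n : ℕ) (a : ℝ) : ℝ := Real.sqrt (((n : ℝ) + 1) ^ 2 + a)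

/-- ρ(a) = Σ_{i≥1} 1/(i² + a). -/
def ρa (a : ℝ) : ℝ := ∑' n : ℕ, 1 / (((n : ℝ) + 1) ^ 2 + a)

lemma cos_int_integral (k : ℤ) (hk : k ≠ 0) :
    ∫ x in (0:ℝ)..Real.pi, Real.cos ((k:ℝ) * x) = 0 := by
  have hkr : (k:ℝ) ≠ 0 := Int.cast_ne_zero.mpr hk
  rw [intervalIntegral.integral_comp_mul_left (fun x => Real.cos x) hkr]
  simp [Real.sin_int_mul_pi]

lemma psi_mul_psi (i j : ℕ) (x : ℝ) :
    ψs i x * ψs j x =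
      (Real.cos ((((i:ℝ)+1) - ((j:ℝ)+1)) * x) - Real.cos ((((i:ℝ)+1) + ((j:ℝ)+1)) * x)) / 2 := by
  have h1 : (((i:ℝ)+1) - ((j:ℝ)+1)) * x = ((i:ℝ)+1)*x - ((j:ℝ)+1)*x := by ring
  have h2 : (((i:ℝ)+1) + ((j:ℝ)+1)) * x = ((i:ℝ)+1)*x + ((j:ℝ)+1)*x := by ring
  rw [h1, h2, Real.cos_sub, Real.cos_add]
  unfold ψs; ring

lemma integral_psi_mul_psi (i j : ℕ) :
    ∫ x in Set.Ioo (0:ℝ) Real.pi, ψs i x * ψs j x = if i = j then Real.pi / 2 else 0 := by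
  rw [← MeasureTheory.integral_Ioc_eq_integral_Ioo,
      ← intervalIntegral.integral_of_le Real.pi_pos.le]
  have hint : ∀ c : ℝ, IntervalIntegrable (fun x => Real.cos (c * x)) volume 0 Real.pi :=
    fun c => (Real.continuous_cos.comp (continuous_const.mul continuous_id)).intervalIntegrable _ _
  calc ∫ x in (0:ℝ)..Real.pi, ψs i x * ψs j x
      = ∫ x in (0:ℝ)..Real.pi,
          (Real.cos ((((i:ℝ)+1) - ((j:ℝ)+1)) * x) - Real.cos ((((i:ℝ)+1) + ((j:ℝ)+1)) * x)) / 2 := by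
        exact intervalIntegral.integral_congr (fun x _ => psi_mul_psi i j x)
    _ = ((∫ x in (0:ℝ)..Real.pi, Real.cos ((((i:ℝ)+1) - ((j:ℝ)+1)) * x)) -
          ∫ x in (0:ℝ)..Real.pi, Real.cos ((((i:ℝ)+1) + ((j:ℝ)+1)) * x)) / 2 := by
        rw [intervalIntegral.integral_div, intervalIntegral.integral_sub (hint _) (hint _)]
    _ = if i = j then Real.pi / 2 else 0 := by
        have hsum : (∫ x in (0:ℝ)..Real.pi, Real.cos ((((i:ℝ)+1) + ((j:ℝ)+1)) * x)) = 0 := by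
          have : (((i:ℝ)+1) + ((j:ℝ)+1)) = ((i + j + 2 : ℤ) : ℝ) := by push_cast; ring
          rw [this]; exact cos_int_integral _ (by omega)
        rw [hsum]
        by_cases h : i = j
        · subst h
          have : (((i:ℝ)+1) - ((i:ℝ)+1)) = 0 := by ring
          simp [this]
        · have hij : ((i:ℤ) - j) ≠ 0 := by
            intro hc; apply h; omega
          have : (((i:ℝ)+1) - ((j:ℝ)+1)) = (((i:ℤ) - j : ℤ) : ℝ) := by push_cast; ring
          rw [this, cos_int_integral _ hij]
          simp [h]

instance : IsFiniteMeasure μI := by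
  constructor
  rw [μI, Measure.restrict_apply_univ]
  simp [Real.volume_Ioo]

lemma psi_cont (n : ℕ) : Continuous (ψs n) :=
  Real.continuous_sin.comp (continuous_const.mul continuous_id)

lemma psi_bound (n : ℕ) (x : ℝ) : |ψs n x| ≤ 1 := Real.abs_sin_le_one _

lemma memL2_psi (n : ℕ) : MemLp (ψs n) 2 μI :=
  MemLp.of_bound ((psi_cont n).aestronglyMeasurable) 1
    (Filter.Eventually.of_forall fun x => by simpa using psi_bound n x)

lemma memL2_mul_psi {q : ℝ → ℝ} (hq : MemLp q 2 μI) (n : ℕ) :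
    MemLp (fun x => q x * ψs n x) 2 μI := by
  refine MemLp.of_le hq (hq.aestronglyMeasurable.mul (psi_cont n).aestronglyMeasurable) ?_
  refine Filter.Eventually.of_forall fun x => ?_
  simp only [norm_mul, Real.norm_eq_abs]
  calc |q x| * |ψs n x| ≤ |q x| * 1 := by
        exact mul_le_mul_of_nonneg_left (psi_bound n x) (abs_nonneg _)
    _ = |q x| := mul_one _

lemma inner_toLp {f g : ℝ → ℝ} (hf : MemLp f 2 μI) (hg : MemLp g 2 μI) :
    (inner ℝ (hf.toLp f) (hg.toLp g) : ℝ) = ∫ x, f x * g x ∂μI := by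
  rw [MeasureTheory.L2.inner_def]
  refine integral_congr_ae ?_
  filter_upwards [hf.coeFn_toLp, hg.coeFn_toLp] with x h1 h2
  simp [h1, h2, RCLike.inner_apply, mul_comm]

def eb (n : ℕ) : Lp ℝ 2 μI := Real.sqrt (2 / Real.pi) • (memL2_psi n).toLp (ψs n)

lemma tpos : (0:ℝ) < 2 / Real.pi := by positivity

lemma eb_orthonormal : Orthonormal ℝ eb := by
  rw [orthonormal_iff_ite]
  intro i j
  rw [eb, eb, inner_smul_left, inner_smul_right, inner_toLp]
  have : ∫ x, ψs i x * ψs j x ∂μI = if i = j then Real.pi / 2 else 0 :=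
    integral_psi_mul_psi i j
  rw [this]
  by_cases h : i = j
  · simp only [h, if_pos rfl, RCLike.star_def, conj_trivial]
    rw [← mul_assoc, Real.mul_self_sqrt tpos.le]
    simp only [if_true]; field_simp
  · simp [h]

lemma norm_toLp_eq {h : ℝ → ℝ} (hh : MemLp h 2 μI) :
    ‖hh.toLp h‖ = (eLpNorm h 2 μI).toReal := by
  rw [Lp.norm_toLp]

lemma inner_eb {h : ℝ → ℝ} (hh : MemLp h 2 μI) (n : ℕ) :
    (inner ℝ (eb n) (hh.toLp h) : ℝ) = Real.sqrt (2 / Real.pi) * ∫ x, h x * ψs n x ∂μI := by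
  rw [eb, inner_smul_left, inner_toLp (memL2_psi n) hh]
  simp only [RCLike.star_def, conj_trivial]
  congr 1
  exact integral_congr_ae (Filter.Eventually.of_forall fun x => mul_comm _ _)

lemma bessel {h : ℝ → ℝ} (hh : MemLp h 2 μI) :
    Summable (fun n => (∫ x, h x * ψs n x ∂μI)^2) ∧
      ∑' n, (∫ x, h x * ψs n x ∂μI)^2 ≤ (Real.pi/2) * ((eLpNorm h 2 μI).toReal)^2 := by
  have key : ∀ n, (∫ x, h x * ψs n x ∂μI)^2
      = (Real.pi/2) * ‖(inner ℝ (eb n) (hh.toLp h) : ℝ)‖^2 := by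
    intro n
    rw [inner_eb hh n, Real.norm_eq_abs, sq_abs, mul_pow, Real.sq_sqrt tpos.le]
    field_simp
  have hsummable := (eb_orthonormal.inner_products_summable (x := hh.toLp h))
  constructor
  · simp_rw [key]; exact hsummable.mul_left _
  · calc ∑' n, (∫ x, h x * ψs n x ∂μI)^2
        = (Real.pi/2) * ∑' n, ‖(inner ℝ (eb n) (hh.toLp h) : ℝ)‖^2 := by
          simp_rw [key]; exact tsum_mul_left
      _ ≤ (Real.pi/2) * ‖hh.toLp h‖^2 := by
          apply mul_le_mul_of_nonneg_left (eb_orthonormal.tsum_inner_products_le _)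
          positivity
      _ = (Real.pi/2) * ((eLpNorm h 2 μI).toReal)^2 := by rw [norm_toLp_eq]

lemma setInt_eq (f : ℝ → ℝ) : ∫ x in Set.Ioo (0:ℝ) Real.pi, f x = ∫ x, f x ∂μI := rfl

lemma l2norm_nonneg (f : ℝ → ℝ) : 0 ≤ l2norm f := ENNReal.toReal_nonneg

lemma coeff_bessel {f : ℝ → ℝ} (hf : MemL2 f) :
    Summable (fun n => (sineCoeff f n)^2) ∧
      ∑' n, (sineCoeff f n)^2 ≤ (2/Real.pi) * (l2norm f)^2 := by
  have hb := bessel hf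
  have key : ∀ n, (sineCoeff f n)^2
      = (2/Real.pi)^2 * (∫ x, f x * ψs n x ∂μI)^2 := by
    intro n; rw [sineCoeff, setInt_eq, mul_pow]
  constructor
  · simp_rw [key]; exact hb.1.mul_left _
  · calc ∑' n, (sineCoeff f n)^2 = (2/Real.pi)^2 * ∑' n, (∫ x, f x * ψs n x ∂μI)^2 := by
          simp_rw [key]; exact tsum_mul_left
    _ ≤ (2/Real.pi)^2 * ((Real.pi/2) * (l2norm f)^2) := by
        apply mul_le_mul_of_nonneg_left hb.2; positivity
    _ = (2/Real.pi) * (l2norm f)^2 := by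
        have : Real.pi ≠ 0 := Real.pi_ne_zero
        field_simp

lemma coeff_abs_le {f : ℝ → ℝ} (hf : MemL2 f) (n : ℕ) :
    |sineCoeff f n| ≤ Real.sqrt (2/Real.pi) * l2norm f := by
  have h1 : (sineCoeff f n)^2 ≤ (2/Real.pi) * (l2norm f)^2 :=
    le_trans (Summable.le_tsum (coeff_bessel hf).1 n (fun m _ => sq_nonneg _)) (coeff_bessel hf).2
  have := Real.sqrt_le_sqrt h1
  rwa [Real.sqrt_sq_eq_abs, Real.sqrt_mul tpos.le, Real.sqrt_sq (l2norm_nonneg f)] at this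

lemma l2norm_mul_psi_le {q : ℝ → ℝ} (hq : MemL2 q) (n : ℕ) :
    l2norm (fun x => q x * ψs n x) ≤ l2norm q := by
  apply ENNReal.toReal_mono hq.2.ne
  apply eLpNorm_mono_ae
  refine Filter.Eventually.of_forall fun x => ?_
  simp only [Real.norm_eq_abs, abs_mul]
  calc |q x| * |ψs n x| ≤ |q x| * 1 :=
      mul_le_mul_of_nonneg_left (psi_bound n x) (abs_nonneg _)
    _ = |q x| := mul_one _

lemma Q_bessel_right {q : ℝ → ℝ} (hq : MemL2 q) (i : ℕ) :
    Summable (fun j => (∫ x, q x * ψs i x * ψs j x ∂μI)^2) ∧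
      ∑' j, (∫ x, q x * ψs i x * ψs j x ∂μI)^2 ≤ (Real.pi/2) * (l2norm q)^2 := by
  have hb := bessel (memL2_mul_psi hq i)
  have hle : (Real.pi/2) * ((eLpNorm (fun x => q x * ψs i x) 2 μI).toReal)^2
      ≤ (Real.pi/2) * (l2norm q)^2 := by
    apply mul_le_mul_of_nonneg_left _ (by positivity)
    exact pow_le_pow_left₀ ENNReal.toReal_nonneg (l2norm_mul_psi_le hq i) 2
  exact ⟨hb.1, le_trans hb.2 hle⟩

lemma Q_bessel_left {q : ℝ → ℝ} (hq : MemL2 q) (j : ℕ) :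
    Summable (fun i => (∫ x, q x * ψs i x * ψs j x ∂μI)^2) ∧
      ∑' i, (∫ x, q x * ψs i x * ψs j x ∂μI)^2 ≤ (Real.pi/2) * (l2norm q)^2 := by
  have hb := bessel (memL2_mul_psi hq j)
  have key : ∀ i, ∫ x, q x * ψs i x * ψs j x ∂μI = ∫ x, q x * ψs j x * ψs i x ∂μI := by
    intro i
    exact integral_congr_ae (Filter.Eventually.of_forall fun x => by ring)
  constructor
  · simp_rw [key]; exact hb.1
  · simp_rw [key]
    refine le_trans hb.2 ?_
    apply mul_le_mul_of_nonneg_left _ (by positivity)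
    exact pow_le_pow_left₀ ENNReal.toReal_nonneg (l2norm_mul_psi_le hq j) 2

lemma ennreal_cs (u v : ℕ → ENNReal) :
    ∑' n, u n * v n ≤ (∑' n, (u n)^2) ^ ((1:ℝ)/2) * (∑' n, (v n)^2) ^ ((1:ℝ)/2) := by
  have hpq : (2:ℝ).HolderConjugate 2 := Real.holderConjugate_iff.mpr ⟨one_lt_two, by norm_num⟩
  have h := ENNReal.lintegral_mul_le_Lp_mul_Lq (Measure.count : Measure ℕ) hpq
      (measurable_of_countable u).aemeasurable (measurable_of_countable v).aemeasurable
  simp only [Pi.mul_apply, lintegral_count] at h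
  have h2 : ∀ w : ℕ → ENNReal, ∀ n, w n ^ (2:ℝ) = w n ^ 2 := by
    intro w n
    rw [show (2:ℝ) = ((2:ℕ):ℝ) by norm_num, ENNReal.rpow_natCast]
  simp only [h2] at h
  exact h

lemma tsum_ofReal_sq_le {x : ℕ → ℝ} (hsum : Summable (fun n => (x n)^2)) {B : ℝ}
    (hB : ∑' n, (x n)^2 ≤ B) :
    ∑' n, (ENNReal.ofReal |x n|)^2 ≤ ENNReal.ofReal B := by
  have key : ∀ n, (ENNReal.ofReal |x n|)^2 = ENNReal.ofReal ((x n)^2) := by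
    intro n; rw [← ENNReal.ofReal_pow (abs_nonneg _), sq_abs]
  simp_rw [key]
  rw [← ENNReal.ofReal_tsum_of_nonneg (fun n => sq_nonneg _) hsum]
  exact ENNReal.ofReal_le_ofReal hB

lemma rpow_half_ofReal {B : ℝ} (hB : 0 ≤ B) :
    (ENNReal.ofReal B) ^ ((1:ℝ)/2) = ENNReal.ofReal (Real.sqrt B) := by
  rw [ENNReal.ofReal_rpow_of_nonneg hB (by norm_num), Real.sqrt_eq_rpow]

/-- Cauchy–Schwarz with explicit square-sum bounds. -/
lemma cs_with_bounds {x y : ℕ → ℝ} (hx : Summable (fun n => (x n)^2))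
    (hy : Summable (fun n => (y n)^2)) {Bx By : ℝ} (hBx0 : 0 ≤ Bx) (hBy0 : 0 ≤ By)
    (hBx : ∑' n, (x n)^2 ≤ Bx) (hBy : ∑' n, (y n)^2 ≤ By) :
    ∑' n, ENNReal.ofReal |x n| * ENNReal.ofReal |y n|
      ≤ ENNReal.ofReal (Real.sqrt Bx * Real.sqrt By) := by
  refine le_trans (ennreal_cs _ _) ?_
  rw [ENNReal.ofReal_mul (Real.sqrt_nonneg _), ← rpow_half_ofReal hBx0, ← rpow_half_ofReal hBy0]
  exact mul_le_mul' (ENNReal.rpow_le_rpow (tsum_ofReal_sq_le hx hBx) (by norm_num))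
    (ENNReal.rpow_le_rpow (tsum_ofReal_sq_le hy hBy) (by norm_num))

lemma summable_rho {a : ℝ} (ha : 0 < a) :
    Summable (fun n : ℕ => 1 / (((n:ℝ)+1)^2 + a)) := by
  have h1 : Summable (fun n : ℕ => 1 / ((n:ℝ)+1)^2) := by
    have := (summable_nat_add_iff (f := fun n : ℕ => 1 / (n:ℝ)^2) 1).mpr
      (Real.summable_one_div_nat_pow.mpr one_lt_two)
    simpa [add_comm] using this
  refine Summable.of_nonneg_of_le (fun n => by positivity) (fun n => ?_) h1
  apply div_le_div_of_nonneg_left one_pos.le (by positivity)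
  linarith [sq_nonneg ((n:ℝ)+1)]

lemma amgm {s t : ℝ} (hs : 0 < s) (ht : 0 < t) :
    1/(s*t) ≤ (1/2)*(1/(s*s)) + (1/2)*(1/(t*t)) := by
  have key : (1/2)*(1/(s*s)) + (1/2)*(1/(t*t)) - 1/(s*t) = (s - t)^2/(2*(s*s)*(t*t)) := by
    field_simp
    ring
  nlinarith [div_nonneg (sq_nonneg (s - t)) (by positivity : (0:ℝ) ≤ 2*(s*s)*(t*t))]

lemma cs_right {q g : ℝ → ℝ} (hq : MemL2 q) (hg : MemL2 g) (i : ℕ) :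
    ∑' j, ENNReal.ofReal |sineCoeff g j| *
        ENNReal.ofReal |∫ x, q x * ψs i x * ψs j x ∂μI|
      ≤ ENNReal.ofReal (l2norm g * l2norm q) := by
  have hb := Q_bessel_right hq i
  have hc := coeff_bessel hg
  have h := cs_with_bounds hc.1 hb.1 (by positivity) (by positivity) hc.2 hb.2
  refine le_trans h (le_of_eq ?_)
  congr 1
  rw [← Real.sqrt_mul (by positivity)]
  have : 2 / Real.pi * l2norm g ^ 2 * (Real.pi / 2 * l2norm q ^ 2)
      = (l2norm g * l2norm q)^2 := by
    have hpi : Real.pi ≠ 0 := Real.pi_ne_zero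
    field_simp
  rw [this, Real.sqrt_sq (mul_nonneg (l2norm_nonneg _) (l2norm_nonneg _))]

lemma cs_left {q f : ℝ → ℝ} (hq : MemL2 q) (hf : MemL2 f) (j : ℕ) :
    ∑' i, ENNReal.ofReal |sineCoeff f i| *
        ENNReal.ofReal |∫ x, q x * ψs i x * ψs j x ∂μI|
      ≤ ENNReal.ofReal (l2norm f * l2norm q) := by
  have hb := Q_bessel_left hq j
  have hc := coeff_bessel hf
  have h := cs_with_bounds hc.1 hb.1 (by positivity) (by positivity) hc.2 hb.2
  refine le_trans h (le_of_eq ?_)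
  congr 1
  rw [← Real.sqrt_mul (by positivity)]
  have : 2 / Real.pi * l2norm f ^ 2 * (Real.pi / 2 * l2norm q ^ 2)
      = (l2norm f * l2norm q)^2 := by
    have hpi : Real.pi ≠ 0 := Real.pi_ne_zero
    field_simp
  rw [this, Real.sqrt_sq (mul_nonneg (l2norm_nonneg _) (l2norm_nonneg _))]

/-- Key bilinear estimate for R(a) Q R(a): there is a constant C, independent of a > 0,
such that for all q, f, g ∈ L²(0,π) the double series
Σ_i Σ_j |f_i||g_j|/(s_i(a)s_j(a)) |∫ q ψ_i ψ_j| is bounded by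
C ρ(a) ‖q‖_{L²} ‖f‖_{L²} ‖g‖_{L²}. -/
theorem stmt12 :
    ∃ C : ℝ,
      ∀ a : ℝ, 0 < a → ∀ q f g : ℝ → ℝ, MemL2 q → MemL2 f → MemL2 g →
        (∑' i : ℕ, ∑' j : ℕ,
            ENNReal.ofReal
              (|sineCoeff f i| * |sineCoeff g j| / (sa i a * sa j a) *
                |∫ x in Set.Ioo (0:ℝ) Real.pi, q x * ψs i x * ψs j x|)) ≤
          ENNReal.ofReal (C * ρa a * l2norm q * l2norm f * l2norm g) := by
  refine ⟨1, fun a ha q f g hq hf hg => ?_⟩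
  set nq := l2norm q with hnq
  set nf := l2norm f with hnf
  set ng := l2norm g with hng
  have hnq0 : 0 ≤ nq := l2norm_nonneg q
  have hnf0 : 0 ≤ nf := l2norm_nonneg f
  have hng0 : 0 ≤ ng := l2norm_nonneg g
  set K := Real.sqrt (2/Real.pi) with hK
  have hK0 : 0 ≤ K := Real.sqrt_nonneg _
  have hK1 : K ≤ 1 := by
    rw [hK, show (1:ℝ) = Real.sqrt 1 by simp]
    apply Real.sqrt_le_sqrt
    rw [div_le_one Real.pi_pos]
    exact Real.two_le_pi
  set F := fun i => |sineCoeff f i| with hF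
  set G := fun j => |sineCoeff g j| with hG
  set Q := fun (i j : ℕ) => |∫ x, q x * ψs i x * ψs j x ∂μI| with hQ
  set A := fun (n : ℕ) => ((n:ℝ)+1)^2 + a with hA
  have hApos : ∀ n, 0 < A n := fun n => by rw [hA]; positivity
  have hsa : ∀ n, 0 < sa n a := fun n => Real.sqrt_pos.mpr (hApos n)
  have hsa2 : ∀ n, sa n a * sa n a = A n := fun n => Real.mul_self_sqrt (hApos n).le
  have hρ0 : 0 ≤ ρa a := tsum_nonneg (fun n => by positivity)
  -- termwise real bound
  have term_bound : ∀ i j,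
      F i * G j / (sa i a * sa j a) * Q i j ≤
        ((1/2) * (K*nf) * (1/A i)) * (G j * Q i j) +
        ((1/2) * (K*ng) * (1/A j)) * (F i * Q i j) := by
    intro i j
    have hF0 : 0 ≤ F i := abs_nonneg _
    have hG0 : 0 ≤ G j := abs_nonneg _
    have hQ0 : 0 ≤ Q i j := abs_nonneg _
    have h1 : F i * G j / (sa i a * sa j a) * Q i j
        ≤ (1/2)*(F i/(sa i a * sa i a))*(G j*Q i j)
          + (1/2)*(G j/(sa j a * sa j a))*(F i*Q i j) := by
      have h2 := amgm (hsa i) (hsa j)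
      have h3 : F i * G j * Q i j * (1/(sa i a * sa j a))
          ≤ F i * G j * Q i j *
            ((1/2)*(1/(sa i a * sa i a)) + (1/2)*(1/(sa j a * sa j a))) :=
        mul_le_mul_of_nonneg_left h2 (by positivity)
      calc F i * G j / (sa i a * sa j a) * Q i j
          = F i * G j * Q i j * (1/(sa i a * sa j a)) := by ring
        _ ≤ _ := h3
        _ = (1/2)*(F i/(sa i a * sa i a))*(G j*Q i j)
            + (1/2)*(G j/(sa j a * sa j a))*(F i*Q i j) := by ring
    refine le_trans h1 (add_le_add ?_ ?_)
    · rw [hsa2 i]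
      have hFle : F i ≤ K * nf := coeff_abs_le hf i
      calc (1/2)*(F i/A i)*(G j*Q i j) ≤ (1/2)*((K*nf)/A i)*(G j*Q i j) := by
            gcongr
        _ = ((1/2) * (K*nf) * (1/A i)) * (G j * Q i j) := by ring
    · rw [hsa2 j]
      have hGle : G j ≤ K * ng := coeff_abs_le hg j
      calc (1/2)*(G j/A j)*(F i*Q i j) ≤ (1/2)*((K*ng)/A j)*(F i*Q i j) := by
            gcongr
        _ = ((1/2) * (K*ng) * (1/A j)) * (F i * Q i j) := by ring
  -- pass to ENNReal termwise
  have term_bound' : ∀ i j,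
      ENNReal.ofReal (F i * G j / (sa i a * sa j a) * Q i j) ≤
        ENNReal.ofReal (((1/2) * (K*nf) * (1/A i))) * (ENNReal.ofReal (G j) * ENNReal.ofReal (Q i j)) +
        ENNReal.ofReal (((1/2) * (K*ng) * (1/A j))) * (ENNReal.ofReal (F i) * ENNReal.ofReal (Q i j)) := by
    intro i j
    have hF0 : 0 ≤ F i := abs_nonneg _
    have hG0 : 0 ≤ G j := abs_nonneg _
    have hQ0 : 0 ≤ Q i j := abs_nonneg _
    have hAinv : ∀ n, 0 ≤ 1/A n := fun n => (one_div_pos.mpr (hApos n)).le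
    have c1 : 0 ≤ (1/2) * (K*nf) * (1/A i) :=
      mul_nonneg (mul_nonneg (by norm_num) (mul_nonneg hK0 hnf0)) (hAinv i)
    have c2 : 0 ≤ (1/2) * (K*ng) * (1/A j) :=
      mul_nonneg (mul_nonneg (by norm_num) (mul_nonneg hK0 hng0)) (hAinv j)
    refine le_trans (ENNReal.ofReal_le_ofReal (term_bound i j)) (le_of_eq ?_)
    rw [ENNReal.ofReal_add (mul_nonneg c1 (mul_nonneg hG0 hQ0))
          (mul_nonneg c2 (mul_nonneg hF0 hQ0)),
        ENNReal.ofReal_mul c1, ENNReal.ofReal_mul c2,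
        ENNReal.ofReal_mul hG0, ENNReal.ofReal_mul hF0]
  -- sum it all up
  have hρsum : ∑' n, ENNReal.ofReal (1/A n) = ENNReal.ofReal (ρa a) := by
    rw [ρa, ENNReal.ofReal_tsum_of_nonneg (fun n => by positivity) (summable_rho ha)]
  calc (∑' i : ℕ, ∑' j : ℕ,
        ENNReal.ofReal (F i * G j / (sa i a * sa j a) * Q i j))
      ≤ ∑' i : ℕ, ∑' j : ℕ,
          (ENNReal.ofReal (((1/2) * (K*nf) * (1/A i))) * (ENNReal.ofReal (G j) * ENNReal.ofReal (Q i j)) +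
           ENNReal.ofReal (((1/2) * (K*ng) * (1/A j))) * (ENNReal.ofReal (F i) * ENNReal.ofReal (Q i j))) := by
        exact ENNReal.tsum_le_tsum (fun i => ENNReal.tsum_le_tsum (fun j => term_bound' i j))
    _ = (∑' i : ℕ, ∑' j : ℕ, ENNReal.ofReal (((1/2) * (K*nf) * (1/A i))) * (ENNReal.ofReal (G j) * ENNReal.ofReal (Q i j)))
        + (∑' i : ℕ, ∑' j : ℕ, ENNReal.ofReal (((1/2) * (K*ng) * (1/A j))) * (ENNReal.ofReal (F i) * ENNReal.ofReal (Q i j))) := by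
        rw [← ENNReal.tsum_add]
        congr 1
        funext i
        rw [← ENNReal.tsum_add]
    _ ≤ ENNReal.ofReal ((1/2) * (K*nf) * ρa a * (ng * nq))
        + ENNReal.ofReal ((1/2) * (K*ng) * ρa a * (nf * nq)) := by
        refine add_le_add ?_ ?_
        · calc (∑' i : ℕ, ∑' j : ℕ, ENNReal.ofReal (((1/2) * (K*nf) * (1/A i))) * (ENNReal.ofReal (G j) * ENNReal.ofReal (Q i j)))
              = ∑' i : ℕ, ENNReal.ofReal (((1/2) * (K*nf) * (1/A i))) * (∑' j : ℕ, ENNReal.ofReal (G j) * ENNReal.ofReal (Q i j)) := by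
                congr 1; funext i; exact ENNReal.tsum_mul_left
            _ ≤ ∑' i : ℕ, ENNReal.ofReal (((1/2) * (K*nf) * (1/A i))) * ENNReal.ofReal (ng * nq) := by
                refine ENNReal.tsum_le_tsum (fun i => ?_)
                exact mul_le_mul_right (cs_right hq hg i) _
            _ = (∑' i : ℕ, ENNReal.ofReal (((1/2) * (K*nf) * (1/A i)))) * ENNReal.ofReal (ng * nq) :=
                ENNReal.tsum_mul_right
            _ = ENNReal.ofReal ((1/2) * (K*nf)) * ENNReal.ofReal (ρa a) * ENNReal.ofReal (ng * nq) := by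
                congr 1
                rw [← hρsum, ← ENNReal.tsum_mul_left]
                congr 1; funext i
                rw [← ENNReal.ofReal_mul (by positivity)]
            _ = ENNReal.ofReal ((1/2) * (K*nf) * ρa a * (ng * nq)) := by
                rw [← ENNReal.ofReal_mul (by positivity), ← ENNReal.ofReal_mul (by positivity)]
        · calc (∑' i : ℕ, ∑' j : ℕ, ENNReal.ofReal (((1/2) * (K*ng) * (1/A j))) * (ENNReal.ofReal (F i) * ENNReal.ofReal (Q i j)))
              = ∑' j : ℕ, ∑' i : ℕ, ENNReal.ofReal (((1/2) * (K*ng) * (1/A j))) * (ENNReal.ofReal (F i) * ENNReal.ofReal (Q i j)) :=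
                ENNReal.tsum_comm
            _ = ∑' j : ℕ, ENNReal.ofReal (((1/2) * (K*ng) * (1/A j))) * (∑' i : ℕ, ENNReal.ofReal (F i) * ENNReal.ofReal (Q i j)) := by
                congr 1; funext j; exact ENNReal.tsum_mul_left
            _ ≤ ∑' j : ℕ, ENNReal.ofReal (((1/2) * (K*ng) * (1/A j))) * ENNReal.ofReal (nf * nq) := by
                refine ENNReal.tsum_le_tsum (fun j => ?_)
                exact mul_le_mul_right (cs_left hq hf j) _
            _ = (∑' j : ℕ, ENNReal.ofReal (((1/2) * (K*ng) * (1/A j)))) * ENNReal.ofReal (nf * nq) :=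
                ENNReal.tsum_mul_right
            _ = ENNReal.ofReal ((1/2) * (K*ng)) * ENNReal.ofReal (ρa a) * ENNReal.ofReal (nf * nq) := by
                congr 1
                rw [← hρsum, ← ENNReal.tsum_mul_left]
                congr 1; funext j
                rw [← ENNReal.ofReal_mul (by positivity)]
            _ = ENNReal.ofReal ((1/2) * (K*ng) * ρa a * (nf * nq)) := by
                rw [← ENNReal.ofReal_mul (by positivity), ← ENNReal.ofReal_mul (by positivity)]
    _ ≤ ENNReal.ofReal (1 * ρa a * nq * nf * ng) := by
        rw [← ENNReal.ofReal_add (by positivity) (by positivity)]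
        apply ENNReal.ofReal_le_ofReal
        have h1 : (1/2) * (K*nf) * ρa a * (ng * nq) + (1/2) * (K*ng) * ρa a * (nf * nq)
            = K * (ρa a * nq * nf * ng) := by ring
        rw [h1]
        calc K * (ρa a * nq * nf * ng) ≤ 1 * (ρa a * nq * nf * ng) := by
              apply mul_le_mul_of_nonneg_right hK1 (by positivity)
          _ = 1 * ρa a * nq * nf * ng := by ring
end
end
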